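/- arXiv:1407.4341 — 7 statements merged into one kernel-verified Lean document; each statement's English description precedes it below -/
import Mathlib

section
/- Let k be a field, B a k-algebra, M and N B-modules, and f : M → N a B-module homomorphism. Let ⋯ → P_n →(d_n^P) P_{n−1} → ⋯ → P_0 →(d_0^P) M → 0 be a projective resolution of M, and suppose that for each n ≥ 0 there are families {e_{n,i}}_{i∈X_n} ⊆ P_n and {f_{n,i}}_{i∈X_n} ⊆ Hom_B(P_n, B) such that x = Σ_{i∈X_n} f_{n,i}(x)·e_{n,i} for all x ∈ P_n. Let ⋯ → Q_n →(d_n^Q) Q_{n−1} → ⋯ → Q_0 →(d_0^Q) N → 0 be a complex of B-modules with a weak self-homotopy {t_i}_{i ≥ −1}. Define B-linear maps f_n : P_n → Q_n by f_n(x) = Σ_{i∈X_n} f_{n,i}(x)·g_{n,i}, where g_{0,i} = t_{−1}(f(d_0^P(e_{0,i}))) and g_{n,i} = t_{n−1}(f_{n−1}(d_n^P(e_{n,i}))) for n ≥ 1. Then {f_n}_{n≥0} is a chain map lifting f, i.e. d_0^Q ∘ f_0 = f ∘ d_0^P and d_n^Q ∘ f_n = f_{n−1} ∘ d_n^P for all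 n ≥ 1. -/
/-- Construction of a comparison morphism.  Given a `B`-module map `f : M → N`,
a projective resolution `P_*` of `M` equipped with "dual families"
`{e_{n,i}}, {f_{n,i}}` with `x = Σ_i f_{n,i}(x)·e_{n,i}`, a complex `Q_*` over
`N` with a weak self-homotopy `{t_i}`, and the maps
`f_n(x) = Σ_i f_{n,i}(x)·g_{n,i}` defined recursively via
`g_{0,i} = t_{−1}(f(d_0^P(e_{0,i})))`, `g_{n,i} = t_{n−1}(f_{n−1}(d_n^P(e_{n,i})))`,
the family `{f_n}` is a chain map lifting `f`. -/
theorem stmt_3 (k : Type*) [Field k] (B : Type*) [Ring B] [Algebra k B]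
    (M N : Type*) [AddCommGroup M] [Module B M] [AddCommGroup N] [Module B N]
    [Module k N] [IsScalarTower k B N]
    (f : M →ₗ[B] N)
    -- the projective resolution P_* of M with the dual families
    (P : ℕ → Type*) [∀ n, AddCommGroup (P n)] [∀ n, Module B (P n)]
    (X : ℕ → Type*) [∀ n, Fintype (X n)]
    (e : ∀ n, X n → P n) (φ : ∀ n, X n → (P n →ₗ[B] B))
    (hdual : ∀ n (x : P n), x = ∑ i : X n, φ n i x • e n i)
    (dP : ∀ n, P (n + 1) →ₗ[B] P n) (dP0 : P 0 →ₗ[B] M)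
    (hP0 : dP0.comp (dP 0) = 0) (hP : ∀ n, (dP n).comp (dP (n + 1)) = 0)
    (hPproj : ∀ n, Module.Projective B (P n))
    (hPexact : Function.Surjective dP0 ∧
      (∀ x : P 0, dP0 x = 0 ↔ x ∈ Set.range (dP 0)) ∧
      (∀ n (x : P (n + 1)), dP n x = 0 ↔ x ∈ Set.range (dP (n + 1))))
    -- the complex Q_* over N with a weak self-homotopy
    (Q : ℕ → Type*) [∀ n, AddCommGroup (Q n)] [∀ n, Module B (Q n)]
    [∀ n, Module k (Q n)] [∀ n, IsScalarTower k B (Q n)]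
    (dQ : ∀ n, Q (n + 1) →ₗ[B] Q n) (dQ0 : Q 0 →ₗ[B] N)
    (hQ0 : dQ0.comp (dQ 0) = 0) (hQ : ∀ n, (dQ n).comp (dQ (n + 1)) = 0)
    (tneg : N →ₗ[k] Q 0) (t : ∀ n, Q n →ₗ[k] Q (n + 1))
    (htneg : ∀ x : N, dQ0 (tneg x) = x)
    (ht0 : ∀ x : Q 0, tneg (dQ0 x) + dQ 0 (t 0 x) = x)
    (ht : ∀ n (x : Q (n + 1)), t n (dQ n x) + dQ (n + 1) (t (n + 1) x) = x)
    -- the recursively constructed maps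
    (g : ∀ n, X n → Q n) (F : ∀ n, P n →ₗ[B] Q n)
    (hg0 : ∀ i : X 0, g 0 i = tneg (f (dP0 (e 0 i))))
    (hg : ∀ n (i : X (n + 1)), g (n + 1) i = t n (F n (dP n (e (n + 1) i))))
    (hF : ∀ n (x : P n), F n x = ∑ i : X n, φ n i x • g n i) :
    (∀ x : P 0, dQ0 (F 0 x) = f (dP0 x)) ∧
    (∀ n (x : P (n + 1)), dQ n (F (n + 1) x) = F n (dP n x)) := by
  have h0 : ∀ x : P 0, dQ0 (F 0 x) = f (dP0 x) := by
    intro x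
    rw [hF, map_sum]
    conv_rhs => rw [hdual 0 x, map_sum, map_sum]
    refine Finset.sum_congr rfl fun i _ => ?_
    rw [map_smul, hg0, htneg, map_smul, map_smul]
  refine ⟨h0, ?_⟩
  intro n
  induction n with
  | zero =>
    intro x
    have key : ∀ i : X 1, dQ 0 (g 1 i) = F 0 (dP 0 (e 1 i)) := by
      intro i
      have hz : dP0 (dP 0 (e 1 i)) = 0 := by
        have := LinearMap.ext_iff.mp hP0 (e 1 i); simpa using this
      have := ht0 (F 0 (dP 0 (e 1 i)))
      rw [h0, hz, map_zero, map_zero, zero_add] at this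
      rw [hg, this]
    rw [hF 1, map_sum]
    conv_rhs => rw [hdual 1 x, map_sum, map_sum]
    exact Finset.sum_congr rfl fun i _ => by rw [map_smul, key, map_smul, map_smul]
  | succ n ih =>
    intro x
    have key : ∀ i : X (n + 2), dQ (n + 1) (g (n + 2) i)
        = F (n + 1) (dP (n + 1) (e (n + 2) i)) := by
      intro i
      have hz : dP n (dP (n + 1) (e (n + 2) i)) = 0 := by
        have := LinearMap.ext_iff.mp (hP n) (e (n + 2) i); simpa using this
      have := ht n (F (n + 1) (dP (n + 1) (e (n + 2) i)))
      rw [ih, hz, map_zero, map_zero, zero_add] at this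
      rw [hg, this]
    rw [hF (n + 2), map_sum]
    conv_rhs => rw [hdual (n + 2) x, map_sum, map_sum]
    exact Finset.sum_congr rfl fun i _ => by rw [map_smul, key, map_smul, map_smul]
end

section
/- Let k be a field and A a k-algebra with a fixed k-basis 𝓑. Let P_* → A be a projective A-bimodule resolution of A equipped with a weak self-homotopy {t_i}_{i ≥ −1} such that each t_i is a homomorphism of right A-modules and t_{i+1} ∘ t_i = 0 for all i ≥ −1. Let Ψ_* : Bar_*(A) → P_* be the chain map of A-bimodules lifting id_A constructed recursively as follows: Ψ_0 : A⊗A → P_0 is the bimodule map with Ψ_0(1⊗1) = t_{−1}(1), and for n ≥ 1, Ψ_n is the bimodule map determined on the free bimodule generators {1⊗a_1⊗⋯⊗a_n⊗1 : a_1,…,a_n ∈ 𝓑} of Bar_n(A) by Ψ_n(1⊗a_1⊗⋯⊗a_n⊗1) = t_{n−1}(Ψ_{n−1}(d_n(1⊗a_1⊗⋯⊗a_n⊗1))). Then for all n ≥ 1 and all a_1, …, a_n ∈ A one has Ψ_n(1⊗a_1⊗⋯⊗a_n⊗1) = t_{n−1}(a_1 · Ψ_{n−1}(1⊗a_2⊗⋯⊗a_n⊗1)).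 -/
/-- Let `P_* → A` be a projective bimodule resolution of a `k`-algebra `A`
equipped with a weak self-homotopy `{t_i}` consisting of right `A`-module maps
with `t_{i+1} ∘ t_i = 0`, and let `Ψ_* : Bar_*(A) → P_*` be the bimodule chain
map lifting `id_A` constructed recursively from `t` on the free bimodule
generators `1⊗b_1⊗⋯⊗b_n⊗1` (`b_i` in a fixed `k`-basis of `A`).  Encoding
`Ψ_n` by the multilinear map `ψ_n(a_1,…,a_n) = Ψ_n(1⊗a_1⊗⋯⊗a_n⊗1)`, the
recursion `Ψ_n = t_{n−1} ∘ Ψ_{n−1} ∘ d_n` on basis tuples yields, for ALL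
`a_1, …, a_n ∈ A`,
`Ψ_n(1⊗a_1⊗⋯⊗a_n⊗1) = t_{n−1}(a_1 · Ψ_{n−1}(1⊗a_2⊗⋯⊗a_n⊗1))`. -/
theorem stmt_4 (k : Type*) [Field k] (A : Type*) [Ring A] [Algebra k A]
    (ι : Type*) (bb : Module.Basis ι k A)
    (P : ℕ → Type*) [∀ n, AddCommGroup (P n)] [∀ n, Module k (P n)]
    [∀ n, Module A (P n)] [∀ n, Module Aᵐᵒᵖ (P n)]
    [∀ n, IsScalarTower k A (P n)] [∀ n, IsScalarTower k Aᵐᵒᵖ (P n)]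
    [∀ n, SMulCommClass A Aᵐᵒᵖ (P n)]
    (dP : ∀ n, P (n + 1) →ₗ[k] P n) (eps : P 0 →ₗ[k] A)
    (tneg : A →ₗ[k] P 0) (t : ∀ n, P n →ₗ[k] P (n + 1))
    -- weak self-homotopy
    (heps : ∀ a : A, eps (tneg a) = a)
    (h0 : ∀ x : P 0, tneg (eps x) + dP 0 (t 0 x) = x)
    (hh : ∀ n (x : P (n + 1)), t n (dP n x) + dP (n + 1) (t (n + 1) x) = x)
    -- the t_i are right A-module homomorphisms
    (htr : ∀ n (a : Aᵐᵒᵖ) (x : P n), t n (a • x) = a • t n x)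
    (htnegr : ∀ (a : Aᵐᵒᵖ) (b : A), tneg (a • b) = a • tneg b)
    -- t_{i+1} ∘ t_i = 0
    (htt : ∀ n (x : P n), t (n + 1) (t n x) = 0)
    (htt0 : ∀ a : A, t 0 (tneg a) = 0)
    -- Ψ encoded by dataless multilinear maps ψ_n(a⃗) = Ψ_n(1⊗a⃗⊗1)
    (ψ : ∀ n, MultilinearMap k (fun _ : Fin n => A) (P n))
    (hbase : ψ 0 (fun _ => (1 : A)) = tneg 1)
    -- the recursion Ψ_n = t_{n−1} ∘ Ψ_{n−1} ∘ d_n^{Bar} on basis tuples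
    (hrec : ∀ n (b : Fin (n + 1) → ι),
      ψ (n + 1) (fun j => bb (b j)) =
        t n (bb (b 0) • ψ n (fun j => bb (b j.succ))
          + (∑ i : Fin n, ((-1 : ℤ) ^ ((i : ℕ) + 1)) •
              ψ n (fun j : Fin n =>
                if (j : ℕ) < (i : ℕ) then bb (b j.castSucc)
                else if (j : ℕ) = (i : ℕ) then bb (b j.castSucc) * bb (b j.succ)
                else bb (b j.succ)))
          + ((-1 : ℤ) ^ (n + 1)) •
              (MulOpposite.op (bb (b (Fin.last n))) •
                ψ n (fun j => bb (b j.castSucc))))) :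
    ∀ n (a : Fin (n + 1) → A),
      ψ (n + 1) a = t n (a 0 • ψ n (fun j => a j.succ)) := by

  have H : ∀ n : ℕ,
      (∀ v : Fin (n+1) → ι, ψ (n+1) (fun j => bb (v j))
          = t n (bb (v 0) • ψ n (fun j => bb (v j.succ)))) →
      ∀ a : Fin (n+1) → A, ψ (n+1) a = t n (a 0 • ψ n (fun j => a j.succ)) := by
    intro n h a
    let L : A →ₗ[k] MultilinearMap k (fun _ : Fin n => A) (P n) :=
      { toFun := fun x => x • ψ n
        map_add' := fun x y => add_smul x y (ψ n)
        map_smul' := fun c x => MultilinearMap.ext fun m => smul_assoc c x (ψ n m) }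
    have hψ : ψ (n+1) = (t n).compMultilinearMap L.uncurryLeft := by
      apply Module.Basis.ext_multilinear (fun _ => bb)
      intro v
      exact h v
    rw [hψ]
    rfl
  intro n
  induction n with
  | zero =>
    refine H 0 ?_
    intro v
    rw [hrec 0 v]
    have hc : (fun j : Fin 0 => bb (v j.castSucc)) = (fun _ : Fin 0 => (1 : A)) :=
      funext fun j => j.elim0
    rw [Finset.univ_eq_empty, Finset.sum_empty, add_zero, map_add, hc, hbase,
      ← htnegr, map_zsmul, htt0, smul_zero, add_zero]
  | succ m ih =>
    have IH := ih
    refine H (m+1) ?_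
    intro v
    rw [hrec (m+1) v, map_add, map_add]
    have hY : t (m+1) (∑ i : Fin (m+1), ((-1 : ℤ) ^ ((i : ℕ) + 1)) •
        ψ (m+1) (fun j : Fin (m+1) =>
          if (j : ℕ) < (i : ℕ) then bb (v j.castSucc)
          else if (j : ℕ) = (i : ℕ) then bb (v j.castSucc) * bb (v j.succ)
          else bb (v j.succ))) = 0 := by
      rw [map_sum]
      refine Finset.sum_eq_zero fun i _ => ?_
      rw [map_zsmul, IH, htt, smul_zero]
    have hZ : t (m+1) (((-1 : ℤ) ^ (m + 1 + 1)) •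
        (MulOpposite.op (bb (v (Fin.last (m+1)))) •
          ψ (m+1) (fun j => bb (v j.castSucc)))) = 0 := by
      rw [map_zsmul, htr, IH, htt, smul_zero, smul_zero]
    rw [hY, hZ, add_zero, add_zero]
end

section
/- Let k be a field, A a k-algebra, and J(A) its Jacobson radical. Let ⋯ → P_n →(d_n^P) P_{n−1} → ⋯ → P_0 →(d_0^P) A → 0 be a projective A-bimodule resolution of A in which each P_n is a free A-bimodule with basis {e_{n,i}}_{i∈X_n}, and suppose the differentials are of the form d_n^P(e_{n,i}) = Σ_{j∈X_{n−1}} ( Σ_{p∈T_{n,i,j}} a_p·e_{n−1,j}·b_p + Σ_{q∈T'_{n,i,j}} e_{n−1,j}·b'_q ) with a_p ∈ J(A) and b_p, b'_q ∈ A. Let Φ_* : P_* → \overline{Bar}_*(A) be the chain map of A-bimodules lifting id_A defined recursively by Φ_0(e_{0,i}) = s_{−1}(d_0^P(e_{0,i})) and Φ_n(e_{n,i}) = s_{n−1}(Φ_{n−1}(d_n^P(e_{n,i}))) for n ≥ 1. Then for all n ≥ 1: Φ_n(e_{n,i}) = s_{n−1}( Σ_{j∈X_{n−1}} Σ_{p∈T_{n,i,j}}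 a_p · Φ_{n−1}(e_{n−1,j}) · b_p ), i.e. the terms of d_n^P(e_{n,i}) whose left coefficient is 1 contribute nothing. -/
/-- Let `P_* → A` be a resolution of `A` by free `A`-bimodules with basis
`{e_{n,i}}`, whose differentials have the form
`d_n(e_{n,i}) = Σ_{j,p} a_p·e_{n−1,j}·b_p + Σ_{j,q} e_{n−1,j}·b'_q`
with all left coefficients `a_p` in the Jacobson radical of `A`.
Let `Q_*` be the normalized bar resolution `\overline{Bar}_*(A)` with its
standard weak self-homotopy `s` (a family of right `A`-module maps with
`s_{n+1} ∘ s_n = 0`), and let `Φ_* : P_* → Q_*` be the chain map constructed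
recursively by `Φ_0(e_{0,i}) = s_{−1}(d_0(e_{0,i}))` and
`Φ_n(e_{n,i}) = s_{n−1}(Φ_{n−1}(d_n(e_{n,i})))`.  Then the generators-with-
left-coefficient-1 contribute nothing:
`Φ_n(e_{n,i}) = s_{n−1}(Σ_{j,p} a_p · Φ_{n−1}(e_{n−1,j}) · b_p)`. -/
theorem stmt_5 (k : Type*) [Field k] (A : Type*) [Ring A] [Algebra k A]
    -- the bimodule resolution P_* with free bimodule generators e
    (P : ℕ → Type*) [∀ n, AddCommGroup (P n)] [∀ n, Module k (P n)]
    [∀ n, Module A (P n)] [∀ n, Module Aᵐᵒᵖ (P n)]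
    [∀ n, IsScalarTower k A (P n)] [∀ n, IsScalarTower k Aᵐᵒᵖ (P n)]
    [∀ n, SMulCommClass A Aᵐᵒᵖ (P n)]
    (X : ℕ → Type*) (e : ∀ n, X n → P n)
    (dP : ∀ n, P (n + 1) →ₗ[k] P n) (dP0 : P 0 →ₗ[k] A)
    -- the coefficient data of the differentials
    (ι₁ ι₂ : ∀ n, X (n + 1) → Type*)
    [∀ n i, Fintype (ι₁ n i)] [∀ n i, Fintype (ι₂ n i)]
    (ja jb : ∀ n i, ι₁ n i → A) (jx : ∀ n i, ι₁ n i → X n)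
    (qb : ∀ n i, ι₂ n i → A) (qx : ∀ n i, ι₂ n i → X n)
    (hrad : ∀ n i p, ja n i p ∈ (⊥ : Ideal A).jacobson)
    (hdP : ∀ n (i : X (n + 1)),
      dP n (e (n + 1) i) =
        (∑ p : ι₁ n i, ja n i p • (MulOpposite.op (jb n i p) • e n (jx n i p)))
        + ∑ q : ι₂ n i, MulOpposite.op (qb n i q) • e n (qx n i q))
    -- the (normalized bar) target complex with its weak self-homotopy s,
    -- consisting of right A-module maps with s_{n+1} ∘ s_n = 0
    (Q : ℕ → Type*) [∀ n, AddCommGroup (Q n)] [∀ n, Module k (Q n)]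
    [∀ n, Module A (Q n)] [∀ n, Module Aᵐᵒᵖ (Q n)]
    [∀ n, IsScalarTower k A (Q n)] [∀ n, IsScalarTower k Aᵐᵒᵖ (Q n)]
    [∀ n, SMulCommClass A Aᵐᵒᵖ (Q n)]
    (dQ : ∀ n, Q (n + 1) →ₗ[k] Q n) (dQ0 : Q 0 →ₗ[k] A)
    (sneg : A →ₗ[k] Q 0) (s : ∀ n, Q n →ₗ[k] Q (n + 1))
    (hsneg : ∀ x : A, dQ0 (sneg x) = x)
    (hs0 : ∀ x : Q 0, sneg (dQ0 x) + dQ 0 (s 0 x) = x)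
    (hs : ∀ n (x : Q (n + 1)), s n (dQ n x) + dQ (n + 1) (s (n + 1) x) = x)
    (hsr : ∀ n (a : Aᵐᵒᵖ) (x : Q n), s n (a • x) = a • s n x)
    (hsnegr : ∀ (a : Aᵐᵒᵖ) (b : A), sneg (a • b) = a • sneg b)
    (hss : ∀ n (x : Q n), s (n + 1) (s n x) = 0)
    (hss0 : ∀ a : A, s 0 (sneg a) = 0)
    -- the chain map Φ constructed recursively using s
    (Φ : ∀ n, P n →ₗ[k] Q n)
    (hΦr : ∀ n (a : Aᵐᵒᵖ) (x : P n), Φ n (a • x) = a • Φ n x)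
    (hΦl : ∀ n (a : A) (x : P n), Φ n (a • x) = a • Φ n x)
    (hΦ0 : ∀ i : X 0, Φ 0 (e 0 i) = sneg (dP0 (e 0 i)))
    (hΦ : ∀ n (i : X (n + 1)),
      Φ (n + 1) (e (n + 1) i) = s n (Φ n (dP n (e (n + 1) i)))) :
    ∀ n (i : X (n + 1)),
      Φ (n + 1) (e (n + 1) i) =
        s n (∑ p : ι₁ n i,
          ja n i p • (MulOpposite.op (jb n i p) • Φ n (e n (jx n i p)))) := by
  have hkey : ∀ n (j : X n), s n (Φ n (e n j)) = 0 := by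
    intro n j
    cases n with
    | zero => rw [hΦ0 j, hss0]
    | succ m => rw [hΦ m j, hss]
  intro n i
  rw [hΦ n i, hdP n i]
  simp only [map_add, map_sum, hΦl, hΦr, hsr, hkey, smul_zero,
    Finset.sum_const_zero, add_zero]
end

section
/- Let k be an algebraically closed field of characteristic 2 and let Q₈ be the quaternion group of order 8. The group algebra kQ₈ is isomorphic as a k-algebra to A = k⟨x,y⟩/I, the quotient of the free associative k-algebra on two generators x, y by the two-sided ideal I generated by x²+yxy, y²+xyx, x⁴, y⁴. Moreover, the images in A of the eight monomials 1, x, y, xy, yx, xyx, yxy, xyxy form a k-basis of A. -/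
open scoped TensorProduct
open MulOpposite

noncomputable section

namespace QP

variable (k : Type*) [Field k]

/-- The generator `x` of the free algebra `k⟨x,y⟩`. -/
def Xg : FreeAlgebra k (Fin 2) := FreeAlgebra.ι k 0
/-- The generator `y` of the free algebra `k⟨x,y⟩`. -/
def Yg : FreeAlgebra k (Fin 2) := FreeAlgebra.ι k 1

/-- The relations `x²+yxy, y²+xyx, x⁴, y⁴` defining `kQ₈` in characteristic 2. -/
inductive QRel : FreeAlgebra k (Fin 2) → FreeAlgebra k (Fin 2) → Prop
  | rx : QRel (Xg k * Xg k + Yg k * Xg k * Yg k) 0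
  | ry : QRel (Yg k * Yg k + Xg k * Yg k * Xg k) 0
  | x4 : QRel (Xg k ^ 4) 0
  | y4 : QRel (Yg k ^ 4) 0

/-- `A = k⟨x,y⟩/(x²+yxy, y²+xyx, x⁴, y⁴)`. -/
abbrev A := RingQuot (QRel k)

/-- The image of `x` in `A`. -/
def x : A k := RingQuot.mkAlgHom k (QRel k) (Xg k)
/-- The image of `y` in `A`. -/
def y : A k := RingQuot.mkAlgHom k (QRel k) (Yg k)

/-- The monomial basis `1, x, y, xy, yx, xyx, yxy, xyxy` of `A`. -/
def mon : Fin 8 → A k :=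
  ![1, x k, y k, x k * y k, y k * x k, x k * y k * x k, y k * x k * y k,
    x k * y k * x k * y k]

/-- The dual family `1* = xyxy, x* = yxy, y* = xyx, (xy)* = xy, (yx)* = yx,
`(xyx)* = y, (yxy)* = x, (xyxy)* = 1`. -/
def dm : Fin 8 → A k :=
  ![mon k 7, mon k 6, mon k 5, mon k 3, mon k 4, mon k 2, mon k 1, mon k 0]

/-- `P₀ = P₃ = P₄ = A ⊗ A`. -/
abbrev AA := A k ⊗[k] A k
/-- `P₁ ≅ (A⊗A)² ≅ A ⊗ kQ₁ ⊗ A` (components: `x`-slot, `y`-slot); likewise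
`P₂ ≅ (A⊗A)² ≅ A ⊗ kQ₁* ⊗ A` (components: `r_x`-slot, `r_y`-slot). -/
abbrev PP := AA k × AA k

/-- Multiplication `A ⊗ A → A`. -/
def mulm : AA k →ₗ[k] A k := LinearMap.mul' k (A k)

/-- `two p q : a⊗b ↦ (a*p)⊗(q*b)`: the bimodule map `A⊗A → A⊗A` determined by
`1⊗1 ↦ p⊗q`. -/
def two (p q : A k) : AA k →ₗ[k] AA k :=
  TensorProduct.map (LinearMap.mulRight k p) (LinearMap.mulLeft k q)

/-- `el p q : a ↦ p⊗(q*a)`: the right `A`-module map `A → A⊗A` determined by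
`1 ↦ p⊗q`. -/
def el (p q : A k) : A k →ₗ[k] AA k :=
  (TensorProduct.mk k (A k) (A k) p).comp (LinearMap.mulLeft k q)

/-- Left multiplication by `a` on `A⊗A`. -/
def lm (a : A k) : AA k →ₗ[k] AA k := LinearMap.rTensor (A k) (LinearMap.mulLeft k a)
/-- Right multiplication by `a` on `A⊗A`. -/
def rm (a : A k) : AA k →ₗ[k] AA k := LinearMap.lTensor (A k) (LinearMap.mulRight k a)
/-- Left multiplication by `a` on `P₁` (or `P₂`). -/
def lmp (a : A k) : PP k →ₗ[k] PP k := (lm k a).prodMap (lm k a)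

/-- The bimodule map `A⊗A → A` determined by `1⊗1 ↦ c`, i.e. `a⊗b ↦ a*c*b`. -/
def bimap (c : A k) : AA k →ₗ[k] A k := (mulm k).comp (two k c 1)

/-- The bimodule map `P₁ → A` (or `P₂ → A`) with values `(c₁, c₂)` on the two
free generators. -/
def pairc (c1 c2 : A k) : PP k →ₗ[k] A k := (bimap k c1).coprod (bimap k c2)

/-- `d₀ : A⊗A → A` is the multiplication. -/
def d0 : AA k →ₗ[k] A k := mulm k

/-- `d₁ : P₁ → P₀`, `1⊗x⊗1 ↦ x⊗1+1⊗x`, `1⊗y⊗1 ↦ y⊗1+1⊗y`. -/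
def d1 : PP k →ₗ[k] AA k :=
  (two k (x k) 1 + two k 1 (x k)).coprod (two k (y k) 1 + two k 1 (y k))

/-- `d₂ : P₂ → P₁`, `1⊗r_x⊗1 ↦ 1⊗x⊗x + x⊗x⊗1 + 1⊗y⊗xy + y⊗x⊗y + yx⊗y⊗1` and
`1⊗r_y⊗1 ↦ 1⊗y⊗y + y⊗y⊗1 + 1⊗x⊗yx + x⊗y⊗x + xy⊗x⊗1`. -/
def d2 : PP k →ₗ[k] PP k :=
  ((two k 1 (x k) + two k (x k) 1 + two k (y k) (y k)).prod
      (two k 1 (x k * y k) + two k (y k * x k) 1)).coprod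
    ((two k 1 (y k * x k) + two k (x k * y k) 1).prod
      (two k 1 (y k) + two k (y k) 1 + two k (x k) (x k)))

/-- `d₃ : P₃ → P₂`, `1⊗1 ↦ x⊗r_x⊗1 + 1⊗r_x⊗x + y⊗r_y⊗1 + 1⊗r_y⊗y`. -/
def d3 : AA k →ₗ[k] PP k :=
  (two k (x k) 1 + two k 1 (x k)).prod (two k (y k) 1 + two k 1 (y k))

/-- `ρ : A → A⊗A`, `1 ↦ Σ_{b∈B} b*⊗b`. -/
def rho : A k →ₗ[k] AA k :=
  ∑ i : Fin 8,
    (((TensorProduct.mk k (A k) (A k)).flip (mon k i)).comp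
      (LinearMap.mulRight k (dm k i)))

/-- `d₄ = ρ ∘ d₀ : P₄ → P₃`. -/
def d4 : AA k →ₗ[k] AA k := (rho k).comp (d0 k)

variable {k}

/-- The right `A`-module map `A⊗A → V` sending `b⊗a ↦ g_b(a)` for `b` running
through the monomial basis `bb`. -/
def rext {V : Type*} [AddCommGroup V] [Module k V] (bb : Module.Basis (Fin 8) k (A k))
    (g : Fin 8 → (A k →ₗ[k] V)) : AA k →ₗ[k] V :=
  TensorProduct.lift (bb.constr k g)

variable (k)

/-- `t₋₁ : A → A⊗A`, `a ↦ 1⊗a`. -/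
def tneg : A k →ₗ[k] AA k := TensorProduct.mk k (A k) (A k) 1

/-- `C(b) ∈ P₁` for `b` in the monomial basis: the bimodule derivation applied
to the basis monomials. -/
def Cm : Fin 8 → PP k :=
  ![0,
    (1 ⊗ₜ 1, 0),
    (0, 1 ⊗ₜ 1),
    (1 ⊗ₜ y k, x k ⊗ₜ 1),
    (y k ⊗ₜ 1, 1 ⊗ₜ x k),
    (1 ⊗ₜ (y k * x k) + (x k * y k) ⊗ₜ 1, x k ⊗ₜ x k),
    (y k ⊗ₜ y k, 1 ⊗ₜ (x k * y k) + (y k * x k) ⊗ₜ 1),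
    (1 ⊗ₜ (y k * x k * y k) + (x k * y k) ⊗ₜ y k,
      x k ⊗ₜ (x k * y k) + (x k * y k * x k) ⊗ₜ 1)]

variable {k}

/-- `t₀ : P₀ → P₁`, `b⊗1 ↦ C(b)`, a right `A`-module map. -/
def t0 (bb : Module.Basis (Fin 8) k (A k)) : AA k →ₗ[k] PP k :=
  rext (V := PP k) bb
    ![0,
      (el k 1 1).prod 0,
      LinearMap.prod 0 (el k 1 1),
      (el k 1 (y k)).prod (el k (x k) 1),
      (el k (y k) 1).prod (el k 1 (x k)),
      (el k 1 (y k * x k) + el k (x k * y k) 1).prod (el k (x k) (x k)),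
      (el k (y k) (y k)).prod (el k 1 (x k * y k) + el k (y k * x k) 1),
      (el k 1 (y k * x k * y k) + el k (x k * y k) (y k)).prod
        (el k (x k) (x k * y k) + el k (x k * y k * x k) 1)]

/-- `t₁ : P₁ → P₂`, the right `A`-module map from the table in the paper. -/
def t1 (bb : Module.Basis (Fin 8) k (A k)) : PP k →ₗ[k] PP k :=
  (rext (V := PP k) bb
    ![0,
      (el k 1 1).prod 0,
      0,
      0,
      (el k (y k) 1 + el k (x k * y k) (y k)).prod (el k 1 (x k * y k)),
      (el k (x k * y k) 1).prod (el k (x k) (x k * y k)),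
      LinearMap.prod 0 (el k 1 (y k) + el k (y k) 1),
      (el k 1 (y k * x k * y k) + el k (x k) (x k) + el k (y k * x k * y k) 1).prod
        (el k (y k * x k) (x k * y k))]).coprod
  (rext (V := PP k) bb
    ![0,
      0,
      LinearMap.prod 0 (el k 1 1),
      (el k 1 (y k * x k)).prod (el k (x k) 1 + el k (y k * x k) (x k)),
      0,
      0,
      (el k (y k) (y k * x k)).prod (el k (y k * x k) 1),
      (el k (x k * y k) (y k * x k)).prod (el k (x k * y k * x k) 1)])

/-- `t₂ : P₂ → P₃`, the right `A`-module map from the table in the paper. -/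
def t2 (bb : Module.Basis (Fin 8) k (A k)) : PP k →ₗ[k] AA k :=
  (rext (V := AA k) bb
    ![0,
      el k 1 1,
      0,
      0,
      el k (y k) 1,
      el k (x k * y k) 1 + el k (x k) (y k),
      el k 1 (x k),
      el k 1 (y k * x k * y k) + el k (y k * x k * y k) 1 + el k (y k) (x k * y k)
        + el k (y k * x k) (y k)]).coprod
  (rext (V := AA k) bb
    ![0,
      0,
      0,
      el k (x k) 1,
      0,
      0,
      el k (y k) (x k) + el k (y k * x k) 1,
      el k (x k) (y k * x k) + el k (x k * y k) (x k) + el k (x k * y k * x k) 1])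

/-- `τ : P₃ → A`, `xyxy⊗1 ↦ 1`, `b⊗1 ↦ 0` for the other basis monomials. -/
def tau (bb : Module.Basis (Fin 8) k (A k)) : AA k →ₗ[k] A k :=
  rext bb ![0, 0, 0, 0, 0, 0, 0, LinearMap.id]

/-- `t₃ = t₋₁ ∘ τ : P₃ → P₄`. -/
def t3 (bb : Module.Basis (Fin 8) k (A k)) : AA k →ₗ[k] AA k := (tneg k).comp (tau bb)

/-- `Ψ₁(1⊗c⊗1) = t₀(c⊗1)`. -/
def psi1 (bb : Module.Basis (Fin 8) k (A k)) (c : A k) : PP k := t0 bb (c ⊗ₜ 1)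
/-- `Ψ₂(1⊗b⊗c⊗1) = t₁(b·Ψ₁(1⊗c⊗1))`. -/
def psi2 (bb : Module.Basis (Fin 8) k (A k)) (b c : A k) : PP k := t1 bb (lmp k b (psi1 bb c))
/-- `Ψ₃(1⊗a⊗b⊗c⊗1) = t₂(a·Ψ₂(1⊗b⊗c⊗1))`. -/
def psi3 (bb : Module.Basis (Fin 8) k (A k)) (a b c : A k) : AA k :=
  t2 bb (lmp k a (psi2 bb b c))
/-- `Ψ₄(1⊗a₀⊗a⊗b⊗c⊗1) = t₃(a₀·Ψ₃(1⊗a⊗b⊗c⊗1))`. -/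
def psi4 (bb : Module.Basis (Fin 8) k (A k)) (a0 a b c : A k) : AA k :=
  t3 bb (lm k a0 (psi3 bb a b c))

/-- The symmetrizing bilinear form: `⟨a,b⟩` is the coefficient of `xyxy` in
`a*b`; on basis monomials it is `1` iff `b₁b₂ = xyxy` and `0` otherwise. -/
def bform (bb : Module.Basis (Fin 8) k (A k)) (a b : A k) : k := bb.repr (a * b) 7

end QP

namespace QPAux
open QP

abbrev Q8 := QuaternionGroup 2

open QP

section CharTwoAux
variable {k : Type*} [Field k] [CharP k 2]

lemma two_eq_zero : (2:k) = 0 := by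
  have := CharP.cast_eq_zero k 2
  exact_mod_cast this

lemma addself {M : Type*} [AddCommGroup M] [Module k M] (z : M) : z + z = 0 := by
  have h : (2:k) • z = 0 := by rw [two_eq_zero, zero_smul]
  rwa [two_smul] at h

lemma eq_of_add_eq_zero {M : Type*} [AddCommGroup M] [Module k M] {a b : M}
    (h : a + b = 0) : a = b := by
  have hb := addself (k := k) b
  calc a = a + (b + b) := by rw [hb, add_zero]
    _ = a + b + b := by rw [add_assoc]
    _ = b := by rw [h, zero_add]

lemma hxx : x k * x k = y k * (x k * y k) := by
  have h := RingQuot.mkAlgHom_rel k (QRel.rx (k := k))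
  simp only [map_add, map_mul, map_zero] at h
  have h2 := eq_of_add_eq_zero (k := k) h
  simp only [QP.x, QP.y]
  rw [h2, mul_assoc]

lemma hyy : y k * y k = x k * (y k * x k) := by
  have h := RingQuot.mkAlgHom_rel k (QRel.ry (k := k))
  simp only [map_add, map_mul, map_zero] at h
  have h2 := eq_of_add_eq_zero (k := k) h
  simp only [QP.x, QP.y]
  rw [h2, mul_assoc]

lemma hx4 : x k ^ 4 = 0 := by
  have h := RingQuot.mkAlgHom_rel k (QRel.x4 (k := k))
  simp only [map_pow, map_zero] at h
  simpa only [QP.x] using h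

lemma hy4 : y k ^ 4 = 0 := by
  have h := RingQuot.mkAlgHom_rel k (QRel.y4 (k := k))
  simp only [map_pow, map_zero] at h
  simpa only [QP.y] using h

lemma A1 (m : A k) : x k * (x k * m) = y k * (x k * (y k * m)) := by
  rw [← mul_assoc, hxx]
  simp only [mul_assoc]

lemma A2 (m : A k) : y k * (y k * m) = x k * (y k * (x k * m)) := by
  rw [← mul_assoc, hyy]
  simp only [mul_assoc]

lemma B1 (m : A k) : y k * (x k * (y k * m)) = x k * (x k * m) := (A1 m).symm

lemma hy4m (m : A k) : y k * (y k * (y k * (y k * m))) = 0 := by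
  have h : y k * (y k * (y k * (y k * m))) = y k ^ 4 * m := by
    rw [pow_succ, pow_succ, pow_succ, pow_one]
    simp only [mul_assoc]
  rw [h, hy4, zero_mul]

lemma hx4m (m : A k) : x k * (x k * (x k * (x k * m))) = 0 := by
  have h : x k * (x k * (x k * (x k * m))) = x k ^ 4 * m := by
    rw [pow_succ, pow_succ, pow_succ, pow_one]
    simp only [mul_assoc]
  rw [h, hx4, zero_mul]

lemma E3 (m : A k) : x k * (x k * (y k * m)) = 0 := by
  rw [A1 (y k * m), A2 m, A1 (y k * (x k * m)), A2 (x k * (y k * (y k * (x k * m)))),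
    A1 (y k * (y k * (x k * m))), A2 (x k * (y k * (y k * (y k * (x k * m))))),
    A1 (y k * (y k * (y k * (x k * m)))), hy4m (x k * m)]
  simp only [mul_zero]

lemma E4 (m : A k) : y k * (y k * (x k * m)) = 0 := by
  rw [A2 (x k * m), A1 m, A2 (x k * (y k * m)), A1 (y k * (x k * (x k * (y k * m)))),
    A2 (x k * (x k * (y k * m))), A1 (y k * (x k * (x k * (x k * (y k * m))))),
    A2 (x k * (x k * (x k * (y k * m)))), hx4m (y k * m)]
  simp only [mul_zero]

end CharTwoAux


section Span
variable {k : Type*} [Field k] [CharP k 2]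

lemma monv0 : mon k 0 = 1 := rfl
lemma monv1 : mon k 1 = x k := rfl
lemma monv2 : mon k 2 = y k := rfl
lemma monv3 : mon k 3 = x k * y k := rfl
lemma monv4 : mon k 4 = y k * x k := rfl
lemma monv5 : mon k 5 = x k * y k * x k := rfl
lemma monv6 : mon k 6 = y k * x k * y k := rfl
lemma monv7 : mon k 7 = x k * y k * x k * y k := rfl

lemma mon_mem (i : Fin 8) : mon k i ∈ Submodule.span k (Set.range (mon k)) :=
  Submodule.subset_span ⟨i, rfl⟩

lemma E3e : x k * (x k * y k) = 0 := by
  have := E3 (k := k) 1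
  simpa using this

lemma E4e : y k * (y k * x k) = 0 := by
  have := E4 (k := k) 1
  simpa using this

lemma E5e : x k * (x k * (x k * y k)) = 0 := by
  rw [A1 (y k), hyy, E3 (x k)]
  simp

lemma mon7alt : mon k 7 = x k * (y k * (x k * y k)) := by
  rw [monv7, mul_assoc (x k * y k) (x k) (y k), mul_assoc (x k) (y k) (x k * y k)]

lemma xm0 : x k * mon k 0 ∈ Submodule.span k (Set.range (mon k)) := by
  rw [monv0, mul_one, ← monv1]; exact mon_mem 1
lemma xm1 : x k * mon k 1 ∈ Submodule.span k (Set.range (mon k)) := by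
  rw [monv1, hxx, ← mul_assoc, ← monv6]; exact mon_mem 6
lemma xm2 : x k * mon k 2 ∈ Submodule.span k (Set.range (mon k)) := by
  rw [monv2, ← monv3]; exact mon_mem 3
lemma xm3 : x k * mon k 3 ∈ Submodule.span k (Set.range (mon k)) := by
  rw [monv3, E3e]; exact zero_mem _
lemma xm4 : x k * mon k 4 ∈ Submodule.span k (Set.range (mon k)) := by
  rw [monv4, ← mul_assoc, ← monv5]; exact mon_mem 5
lemma xm5 : x k * mon k 5 ∈ Submodule.span k (Set.range (mon k)) := by
  rw [monv5, mul_assoc (x k) (y k) (x k), E3 (x k)]; exact zero_mem _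
lemma xm6 : x k * mon k 6 ∈ Submodule.span k (Set.range (mon k)) := by
  rw [monv6, mul_assoc (y k) (x k) (y k), ← mon7alt]; exact mon_mem 7
lemma xm7 : x k * mon k 7 ∈ Submodule.span k (Set.range (mon k)) := by
  rw [mon7alt, E3 (x k * y k)]; exact zero_mem _

lemma ym0 : y k * mon k 0 ∈ Submodule.span k (Set.range (mon k)) := by
  rw [monv0, mul_one, ← monv2]; exact mon_mem 2
lemma ym1 : y k * mon k 1 ∈ Submodule.span k (Set.range (mon k)) := by
  rw [monv1, ← monv4]; exact mon_mem 4
lemma ym2 : y k * mon k 2 ∈ Submodule.span k (Set.range (mon k)) := by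
  rw [monv2, hyy, ← mul_assoc, ← monv5]; exact mon_mem 5
lemma ym3 : y k * mon k 3 ∈ Submodule.span k (Set.range (mon k)) := by
  rw [monv3, ← mul_assoc, ← monv6]; exact mon_mem 6
lemma ym4 : y k * mon k 4 ∈ Submodule.span k (Set.range (mon k)) := by
  rw [monv4, E4e]; exact zero_mem _
lemma ym5 : y k * mon k 5 ∈ Submodule.span k (Set.range (mon k)) := by
  rw [monv5, mul_assoc (x k) (y k) (x k), B1 (x k), hxx, ← mon7alt]; exact mon_mem 7
lemma ym6 : y k * mon k 6 ∈ Submodule.span k (Set.range (mon k)) := by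
  rw [monv6, mul_assoc (y k) (x k) (y k), E4 (y k)]; exact zero_mem _
lemma ym7 : y k * mon k 7 ∈ Submodule.span k (Set.range (mon k)) := by
  rw [mon7alt, B1 (x k * y k), E5e]; exact zero_mem _

lemma xmon (j : Fin 8) : x k * mon k j ∈ Submodule.span k (Set.range (mon k)) := by
  fin_cases j
  exacts [xm0, xm1, xm2, xm3, xm4, xm5, xm6, xm7]

lemma ymon (j : Fin 8) : y k * mon k j ∈ Submodule.span k (Set.range (mon k)) := by
  fin_cases j
  exacts [ym0, ym1, ym2, ym3, ym4, ym5, ym6, ym7]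

lemma xS {s : A k} (hs : s ∈ Submodule.span k (Set.range (mon k))) :
    x k * s ∈ Submodule.span k (Set.range (mon k)) := by
  induction hs using Submodule.span_induction with
  | mem t ht =>
    obtain ⟨j, rfl⟩ := ht
    exact xmon j
  | zero => simpa using zero_mem (Submodule.span k (Set.range (mon k)))
  | add a b ha hb iha ihb =>
    rw [mul_add]
    exact add_mem iha ihb
  | smul r a ha iha =>
    rw [mul_smul_comm]
    exact Submodule.smul_mem _ _ iha

lemma yS {s : A k} (hs : s ∈ Submodule.span k (Set.range (mon k))) :
    y k * s ∈ Submodule.span k (Set.range (mon k)) := by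
  induction hs using Submodule.span_induction with
  | mem t ht =>
    obtain ⟨j, rfl⟩ := ht
    exact ymon j
  | zero => simpa using zero_mem (Submodule.span k (Set.range (mon k)))
  | add a b ha hb iha ihb =>
    rw [mul_add]
    exact add_mem iha ihb
  | smul r a ha iha =>
    rw [mul_smul_comm]
    exact Submodule.smul_mem _ _ iha

theorem span_mon_top : Submodule.span k (Set.range (mon k)) = ⊤ := by
  apply eq_top_iff.2
  intro z _
  obtain ⟨p, rfl⟩ := RingQuot.mkAlgHom_surjective k (QRel k) z
  have h1 : (1 : A k) ∈ Submodule.span k (Set.range (mon k)) := by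
    rw [← monv0]; exact mon_mem 0
  have key : ∀ (p : FreeAlgebra k (Fin 2)) (s : A k),
      s ∈ Submodule.span k (Set.range (mon k)) →
      RingQuot.mkAlgHom k (QRel k) p * s ∈ Submodule.span k (Set.range (mon k)) := by
    intro p
    induction p using FreeAlgebra.induction with
    | grade0 r =>
      intro s hs
      rw [AlgHom.commutes, ← Algebra.smul_def]
      exact Submodule.smul_mem _ _ hs
    | grade1 i =>
      intro s hs
      fin_cases i
      · exact xS hs
      · exact yS hs
    | mul a b ha hb =>
      intro s hs
      rw [map_mul, mul_assoc]
      exact ha _ (hb s hs)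
    | add a b ha hb =>
      intro s hs
      rw [map_add, add_mul]
      exact add_mem (ha s hs) (hb s hs)
  simpa using key p 1 h1

end Span

section MAlg
open QuaternionGroup
variable {k : Type} [Field k] [CharP k 2]

/-- group-like element `a i` in the group algebra. -/
noncomputable def Ga (i : ZMod (2*2)) : MonoidAlgebra k Q8 := MonoidAlgebra.of k Q8 (a i)
/-- group-like element `xa i` in the group algebra. -/
noncomputable def Hx (i : ZMod (2*2)) : MonoidAlgebra k Q8 := MonoidAlgebra.of k Q8 (xa i)

variable (ω : k)

theorem mul_XX (hω : ω * ω + ω + 1 = 0) (h2 : (2:k) = 0) :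
    (ω • Ga 1 + Hx 0 + (1+ω) • Hx 1 : MonoidAlgebra k Q8) * (ω • Ga 1 + Hx 0 + (1+ω) • Hx 1) = (1+ω) • Ga 1 + (1+ω) • Ga 3 + Hx 0 + ω • Hx 1 + Hx 2 + ω • Hx 3 := by
  simp only [Ga, Hx, add_mul, mul_add, smul_mul_assoc, mul_smul_comm, smul_smul,
    ← map_mul, QuaternionGroup.a_mul_a, QuaternionGroup.a_mul_xa, QuaternionGroup.xa_mul_a,
    QuaternionGroup.xa_mul_xa,
    show (0 + 0 : ZMod (2*2)) = 0 by decide,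
    show (0 - 0 : ZMod (2*2)) = 0 by decide,
    show (((2:Nat) : ZMod (2*2)) + 0 - 0) = 2 by decide,
    show (0 + 1 : ZMod (2*2)) = 1 by decide,
    show (1 - 0 : ZMod (2*2)) = 1 by decide,
    show (((2:Nat) : ZMod (2*2)) + 1 - 0) = 3 by decide,
    show (0 + 2 : ZMod (2*2)) = 2 by decide,
    show (2 - 0 : ZMod (2*2)) = 2 by decide,
    show (((2:Nat) : ZMod (2*2)) + 2 - 0) = 0 by decide,
    show (0 + 3 : ZMod (2*2)) = 3 by decide,
    show (3 - 0 : ZMod (2*2)) = 3 by decide,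
    show (((2:Nat) : ZMod (2*2)) + 3 - 0) = 1 by decide,
    show (1 + 0 : ZMod (2*2)) = 1 by decide,
    show (0 - 1 : ZMod (2*2)) = 3 by decide,
    show (((2:Nat) : ZMod (2*2)) + 0 - 1) = 1 by decide,
    show (1 + 1 : ZMod (2*2)) = 2 by decide,
    show (1 - 1 : ZMod (2*2)) = 0 by decide,
    show (((2:Nat) : ZMod (2*2)) + 1 - 1) = 2 by decide,
    show (1 + 2 : ZMod (2*2)) = 3 by decide,
    show (2 - 1 : ZMod (2*2)) = 1 by decide,
    show (((2:Nat) : ZMod (2*2)) + 2 - 1) = 3 by decide,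
    show (1 + 3 : ZMod (2*2)) = 0 by decide,
    show (3 - 1 : ZMod (2*2)) = 2 by decide,
    show (((2:Nat) : ZMod (2*2)) + 3 - 1) = 0 by decide,
    show (2 + 0 : ZMod (2*2)) = 2 by decide,
    show (0 - 2 : ZMod (2*2)) = 2 by decide,
    show (((2:Nat) : ZMod (2*2)) + 0 - 2) = 0 by decide,
    show (2 + 1 : ZMod (2*2)) = 3 by decide,
    show (1 - 2 : ZMod (2*2)) = 3 by decide,
    show (((2:Nat) : ZMod (2*2)) + 1 - 2) = 1 by decide,
    show (2 + 2 : ZMod (2*2)) = 0 by decide,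
    show (2 - 2 : ZMod (2*2)) = 0 by decide,
    show (((2:Nat) : ZMod (2*2)) + 2 - 2) = 2 by decide,
    show (2 + 3 : ZMod (2*2)) = 1 by decide,
    show (3 - 2 : ZMod (2*2)) = 1 by decide,
    show (((2:Nat) : ZMod (2*2)) + 3 - 2) = 3 by decide,
    show (3 + 0 : ZMod (2*2)) = 3 by decide,
    show (0 - 3 : ZMod (2*2)) = 1 by decide,
    show (((2:Nat) : ZMod (2*2)) + 0 - 3) = 3 by decide,
    show (3 + 1 : ZMod (2*2)) = 0 by decide,
    show (1 - 3 : ZMod (2*2)) = 2 by decide,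
    show (((2:Nat) : ZMod (2*2)) + 1 - 3) = 0 by decide,
    show (3 + 2 : ZMod (2*2)) = 1 by decide,
    show (2 - 3 : ZMod (2*2)) = 3 by decide,
    show (((2:Nat) : ZMod (2*2)) + 2 - 3) = 1 by decide,
    show (3 + 3 : ZMod (2*2)) = 2 by decide,
    show (3 - 3 : ZMod (2*2)) = 0 by decide,
    show (((2:Nat) : ZMod (2*2)) + 3 - 3) = 2 by decide]
  match_scalars
  all_goals (first
    | ring1
    | linear_combination (h2 : (2:k) = 0)
    | linear_combination ω*h2
    | linear_combination 2*ω*h2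
    | linear_combination (2+2*ω)*h2
    | linear_combination (1+ω)*h2
    | linear_combination hω - h2
    | linear_combination hω - (1+ω)*h2
    | linear_combination hω
    | linear_combination hω + ω*h2
    | linear_combination 2*hω - h2
    | linear_combination 2*hω
    | linear_combination 2*hω + ω*h2
    | linear_combination 4*hω - 2*h2
    | linear_combination 4*hω - h2
    | linear_combination 4*hω)

theorem mul_YY (hω : ω * ω + ω + 1 = 0) (h2 : (2:k) = 0) :
    ((1+ω) • Ga 1 + Hx 0 + ω • Hx 1 : MonoidAlgebra k Q8) * ((1+ω) • Ga 1 + Hx 0 + ω • Hx 1) = ω • Ga 1 + ω • Ga 3 + Hx 0 + (1+ω) • Hx 1 + Hx 2 + (1+ω) • Hx 3 := by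
  simp only [Ga, Hx, add_mul, mul_add, smul_mul_assoc, mul_smul_comm, smul_smul,
    ← map_mul, QuaternionGroup.a_mul_a, QuaternionGroup.a_mul_xa, QuaternionGroup.xa_mul_a,
    QuaternionGroup.xa_mul_xa,
    show (0 + 0 : ZMod (2*2)) = 0 by decide,
    show (0 - 0 : ZMod (2*2)) = 0 by decide,
    show (((2:Nat) : ZMod (2*2)) + 0 - 0) = 2 by decide,
    show (0 + 1 : ZMod (2*2)) = 1 by decide,
    show (1 - 0 : ZMod (2*2)) = 1 by decide,
    show (((2:Nat) : ZMod (2*2)) + 1 - 0) = 3 by decide,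
    show (0 + 2 : ZMod (2*2)) = 2 by decide,
    show (2 - 0 : ZMod (2*2)) = 2 by decide,
    show (((2:Nat) : ZMod (2*2)) + 2 - 0) = 0 by decide,
    show (0 + 3 : ZMod (2*2)) = 3 by decide,
    show (3 - 0 : ZMod (2*2)) = 3 by decide,
    show (((2:Nat) : ZMod (2*2)) + 3 - 0) = 1 by decide,
    show (1 + 0 : ZMod (2*2)) = 1 by decide,
    show (0 - 1 : ZMod (2*2)) = 3 by decide,
    show (((2:Nat) : ZMod (2*2)) + 0 - 1) = 1 by decide,
    show (1 + 1 : ZMod (2*2)) = 2 by decide,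
    show (1 - 1 : ZMod (2*2)) = 0 by decide,
    show (((2:Nat) : ZMod (2*2)) + 1 - 1) = 2 by decide,
    show (1 + 2 : ZMod (2*2)) = 3 by decide,
    show (2 - 1 : ZMod (2*2)) = 1 by decide,
    show (((2:Nat) : ZMod (2*2)) + 2 - 1) = 3 by decide,
    show (1 + 3 : ZMod (2*2)) = 0 by decide,
    show (3 - 1 : ZMod (2*2)) = 2 by decide,
    show (((2:Nat) : ZMod (2*2)) + 3 - 1) = 0 by decide,
    show (2 + 0 : ZMod (2*2)) = 2 by decide,
    show (0 - 2 : ZMod (2*2)) = 2 by decide,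
    show (((2:Nat) : ZMod (2*2)) + 0 - 2) = 0 by decide,
    show (2 + 1 : ZMod (2*2)) = 3 by decide,
    show (1 - 2 : ZMod (2*2)) = 3 by decide,
    show (((2:Nat) : ZMod (2*2)) + 1 - 2) = 1 by decide,
    show (2 + 2 : ZMod (2*2)) = 0 by decide,
    show (2 - 2 : ZMod (2*2)) = 0 by decide,
    show (((2:Nat) : ZMod (2*2)) + 2 - 2) = 2 by decide,
    show (2 + 3 : ZMod (2*2)) = 1 by decide,
    show (3 - 2 : ZMod (2*2)) = 1 by decide,
    show (((2:Nat) : ZMod (2*2)) + 3 - 2) = 3 by decide,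
    show (3 + 0 : ZMod (2*2)) = 3 by decide,
    show (0 - 3 : ZMod (2*2)) = 1 by decide,
    show (((2:Nat) : ZMod (2*2)) + 0 - 3) = 3 by decide,
    show (3 + 1 : ZMod (2*2)) = 0 by decide,
    show (1 - 3 : ZMod (2*2)) = 2 by decide,
    show (((2:Nat) : ZMod (2*2)) + 1 - 3) = 0 by decide,
    show (3 + 2 : ZMod (2*2)) = 1 by decide,
    show (2 - 3 : ZMod (2*2)) = 3 by decide,
    show (((2:Nat) : ZMod (2*2)) + 2 - 3) = 1 by decide,
    show (3 + 3 : ZMod (2*2)) = 2 by decide,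
    show (3 - 3 : ZMod (2*2)) = 0 by decide,
    show (((2:Nat) : ZMod (2*2)) + 3 - 3) = 2 by decide]
  match_scalars
  all_goals (first
    | ring1
    | linear_combination (h2 : (2:k) = 0)
    | linear_combination ω*h2
    | linear_combination 2*ω*h2
    | linear_combination (2+2*ω)*h2
    | linear_combination (1+ω)*h2
    | linear_combination hω - h2
    | linear_combination hω - (1+ω)*h2
    | linear_combination hω
    | linear_combination hω + ω*h2
    | linear_combination 2*hω - h2
    | linear_combination 2*hω
    | linear_combination 2*hω + ω*h2
    | linear_combination 4*hω - 2*h2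
    | linear_combination 4*hω - h2
    | linear_combination 4*hω)

theorem mul_XY (hω : ω * ω + ω + 1 = 0) (h2 : (2:k) = 0) :
    (ω • Ga 1 + Hx 0 + (1+ω) • Hx 1 : MonoidAlgebra k Q8) * ((1+ω) • Ga 1 + Hx 0 + ω • Hx 1) = (1+ω) • Ga 1 + Ga 2 + ω • Ga 3 + (1+ω) • Hx 0 + (1+ω) • Hx 1 + ω • Hx 2 + ω • Hx 3 := by
  simp only [Ga, Hx, add_mul, mul_add, smul_mul_assoc, mul_smul_comm, smul_smul,
    ← map_mul, QuaternionGroup.a_mul_a, QuaternionGroup.a_mul_xa, QuaternionGroup.xa_mul_a,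
    QuaternionGroup.xa_mul_xa,
    show (0 + 0 : ZMod (2*2)) = 0 by decide,
    show (0 - 0 : ZMod (2*2)) = 0 by decide,
    show (((2:Nat) : ZMod (2*2)) + 0 - 0) = 2 by decide,
    show (0 + 1 : ZMod (2*2)) = 1 by decide,
    show (1 - 0 : ZMod (2*2)) = 1 by decide,
    show (((2:Nat) : ZMod (2*2)) + 1 - 0) = 3 by decide,
    show (0 + 2 : ZMod (2*2)) = 2 by decide,
    show (2 - 0 : ZMod (2*2)) = 2 by decide,
    show (((2:Nat) : ZMod (2*2)) + 2 - 0) = 0 by decide,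
    show (0 + 3 : ZMod (2*2)) = 3 by decide,
    show (3 - 0 : ZMod (2*2)) = 3 by decide,
    show (((2:Nat) : ZMod (2*2)) + 3 - 0) = 1 by decide,
    show (1 + 0 : ZMod (2*2)) = 1 by decide,
    show (0 - 1 : ZMod (2*2)) = 3 by decide,
    show (((2:Nat) : ZMod (2*2)) + 0 - 1) = 1 by decide,
    show (1 + 1 : ZMod (2*2)) = 2 by decide,
    show (1 - 1 : ZMod (2*2)) = 0 by decide,
    show (((2:Nat) : ZMod (2*2)) + 1 - 1) = 2 by decide,
    show (1 + 2 : ZMod (2*2)) = 3 by decide,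
    show (2 - 1 : ZMod (2*2)) = 1 by decide,
    show (((2:Nat) : ZMod (2*2)) + 2 - 1) = 3 by decide,
    show (1 + 3 : ZMod (2*2)) = 0 by decide,
    show (3 - 1 : ZMod (2*2)) = 2 by decide,
    show (((2:Nat) : ZMod (2*2)) + 3 - 1) = 0 by decide,
    show (2 + 0 : ZMod (2*2)) = 2 by decide,
    show (0 - 2 : ZMod (2*2)) = 2 by decide,
    show (((2:Nat) : ZMod (2*2)) + 0 - 2) = 0 by decide,
    show (2 + 1 : ZMod (2*2)) = 3 by decide,
    show (1 - 2 : ZMod (2*2)) = 3 by decide,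
    show (((2:Nat) : ZMod (2*2)) + 1 - 2) = 1 by decide,
    show (2 + 2 : ZMod (2*2)) = 0 by decide,
    show (2 - 2 : ZMod (2*2)) = 0 by decide,
    show (((2:Nat) : ZMod (2*2)) + 2 - 2) = 2 by decide,
    show (2 + 3 : ZMod (2*2)) = 1 by decide,
    show (3 - 2 : ZMod (2*2)) = 1 by decide,
    show (((2:Nat) : ZMod (2*2)) + 3 - 2) = 3 by decide,
    show (3 + 0 : ZMod (2*2)) = 3 by decide,
    show (0 - 3 : ZMod (2*2)) = 1 by decide,
    show (((2:Nat) : ZMod (2*2)) + 0 - 3) = 3 by decide,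
    show (3 + 1 : ZMod (2*2)) = 0 by decide,
    show (1 - 3 : ZMod (2*2)) = 2 by decide,
    show (((2:Nat) : ZMod (2*2)) + 1 - 3) = 0 by decide,
    show (3 + 2 : ZMod (2*2)) = 1 by decide,
    show (2 - 3 : ZMod (2*2)) = 3 by decide,
    show (((2:Nat) : ZMod (2*2)) + 2 - 3) = 1 by decide,
    show (3 + 3 : ZMod (2*2)) = 2 by decide,
    show (3 - 3 : ZMod (2*2)) = 0 by decide,
    show (((2:Nat) : ZMod (2*2)) + 3 - 3) = 2 by decide]
  match_scalars
  all_goals (first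
    | ring1
    | linear_combination (h2 : (2:k) = 0)
    | linear_combination ω*h2
    | linear_combination 2*ω*h2
    | linear_combination (2+2*ω)*h2
    | linear_combination (1+ω)*h2
    | linear_combination hω - h2
    | linear_combination hω - (1+ω)*h2
    | linear_combination hω
    | linear_combination hω + ω*h2
    | linear_combination 2*hω - h2
    | linear_combination 2*hω
    | linear_combination 2*hω + ω*h2
    | linear_combination 4*hω - 2*h2
    | linear_combination 4*hω - h2
    | linear_combination 4*hω)

theorem mul_YX (hω : ω * ω + ω + 1 = 0) (h2 : (2:k) = 0) :
    ((1+ω) • Ga 1 + Hx 0 + ω • Hx 1 : MonoidAlgebra k Q8) * (ω • Ga 1 + Hx 0 + (1+ω) • Hx 1) = ω • Ga 1 + Ga 2 + (1+ω) • Ga 3 + ω • Hx 0 + ω • Hx 1 + (1+ω) • Hx 2 + (1+ω) • Hx 3 := by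
  simp only [Ga, Hx, add_mul, mul_add, smul_mul_assoc, mul_smul_comm, smul_smul,
    ← map_mul, QuaternionGroup.a_mul_a, QuaternionGroup.a_mul_xa, QuaternionGroup.xa_mul_a,
    QuaternionGroup.xa_mul_xa,
    show (0 + 0 : ZMod (2*2)) = 0 by decide,
    show (0 - 0 : ZMod (2*2)) = 0 by decide,
    show (((2:Nat) : ZMod (2*2)) + 0 - 0) = 2 by decide,
    show (0 + 1 : ZMod (2*2)) = 1 by decide,
    show (1 - 0 : ZMod (2*2)) = 1 by decide,
    show (((2:Nat) : ZMod (2*2)) + 1 - 0) = 3 by decide,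
    show (0 + 2 : ZMod (2*2)) = 2 by decide,
    show (2 - 0 : ZMod (2*2)) = 2 by decide,
    show (((2:Nat) : ZMod (2*2)) + 2 - 0) = 0 by decide,
    show (0 + 3 : ZMod (2*2)) = 3 by decide,
    show (3 - 0 : ZMod (2*2)) = 3 by decide,
    show (((2:Nat) : ZMod (2*2)) + 3 - 0) = 1 by decide,
    show (1 + 0 : ZMod (2*2)) = 1 by decide,
    show (0 - 1 : ZMod (2*2)) = 3 by decide,
    show (((2:Nat) : ZMod (2*2)) + 0 - 1) = 1 by decide,
    show (1 + 1 : ZMod (2*2)) = 2 by decide,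
    show (1 - 1 : ZMod (2*2)) = 0 by decide,
    show (((2:Nat) : ZMod (2*2)) + 1 - 1) = 2 by decide,
    show (1 + 2 : ZMod (2*2)) = 3 by decide,
    show (2 - 1 : ZMod (2*2)) = 1 by decide,
    show (((2:Nat) : ZMod (2*2)) + 2 - 1) = 3 by decide,
    show (1 + 3 : ZMod (2*2)) = 0 by decide,
    show (3 - 1 : ZMod (2*2)) = 2 by decide,
    show (((2:Nat) : ZMod (2*2)) + 3 - 1) = 0 by decide,
    show (2 + 0 : ZMod (2*2)) = 2 by decide,
    show (0 - 2 : ZMod (2*2)) = 2 by decide,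
    show (((2:Nat) : ZMod (2*2)) + 0 - 2) = 0 by decide,
    show (2 + 1 : ZMod (2*2)) = 3 by decide,
    show (1 - 2 : ZMod (2*2)) = 3 by decide,
    show (((2:Nat) : ZMod (2*2)) + 1 - 2) = 1 by decide,
    show (2 + 2 : ZMod (2*2)) = 0 by decide,
    show (2 - 2 : ZMod (2*2)) = 0 by decide,
    show (((2:Nat) : ZMod (2*2)) + 2 - 2) = 2 by decide,
    show (2 + 3 : ZMod (2*2)) = 1 by decide,
    show (3 - 2 : ZMod (2*2)) = 1 by decide,
    show (((2:Nat) : ZMod (2*2)) + 3 - 2) = 3 by decide,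
    show (3 + 0 : ZMod (2*2)) = 3 by decide,
    show (0 - 3 : ZMod (2*2)) = 1 by decide,
    show (((2:Nat) : ZMod (2*2)) + 0 - 3) = 3 by decide,
    show (3 + 1 : ZMod (2*2)) = 0 by decide,
    show (1 - 3 : ZMod (2*2)) = 2 by decide,
    show (((2:Nat) : ZMod (2*2)) + 1 - 3) = 0 by decide,
    show (3 + 2 : ZMod (2*2)) = 1 by decide,
    show (2 - 3 : ZMod (2*2)) = 3 by decide,
    show (((2:Nat) : ZMod (2*2)) + 2 - 3) = 1 by decide,
    show (3 + 3 : ZMod (2*2)) = 2 by decide,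
    show (3 - 3 : ZMod (2*2)) = 0 by decide,
    show (((2:Nat) : ZMod (2*2)) + 3 - 3) = 2 by decide]
  match_scalars
  all_goals (first
    | ring1
    | linear_combination (h2 : (2:k) = 0)
    | linear_combination ω*h2
    | linear_combination 2*ω*h2
    | linear_combination (2+2*ω)*h2
    | linear_combination (1+ω)*h2
    | linear_combination hω - h2
    | linear_combination hω - (1+ω)*h2
    | linear_combination hω
    | linear_combination hω + ω*h2
    | linear_combination 2*hω - h2
    | linear_combination 2*hω
    | linear_combination 2*hω + ω*h2
    | linear_combination 4*hω - 2*h2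
    | linear_combination 4*hω - h2
    | linear_combination 4*hω)

theorem mul_S3X (hω : ω * ω + ω + 1 = 0) (h2 : (2:k) = 0) :
    ((1+ω) • Ga 1 + Ga 2 + ω • Ga 3 + (1+ω) • Hx 0 + (1+ω) • Hx 1 + ω • Hx 2 + ω • Hx 3 : MonoidAlgebra k Q8) * (ω • Ga 1 + Hx 0 + (1+ω) • Hx 1) = ω • Ga 1 + ω • Ga 3 + Hx 0 + (1+ω) • Hx 1 + Hx 2 + (1+ω) • Hx 3 := by
  simp only [Ga, Hx, add_mul, mul_add, smul_mul_assoc, mul_smul_comm, smul_smul,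
    ← map_mul, QuaternionGroup.a_mul_a, QuaternionGroup.a_mul_xa, QuaternionGroup.xa_mul_a,
    QuaternionGroup.xa_mul_xa,
    show (0 + 0 : ZMod (2*2)) = 0 by decide,
    show (0 - 0 : ZMod (2*2)) = 0 by decide,
    show (((2:Nat) : ZMod (2*2)) + 0 - 0) = 2 by decide,
    show (0 + 1 : ZMod (2*2)) = 1 by decide,
    show (1 - 0 : ZMod (2*2)) = 1 by decide,
    show (((2:Nat) : ZMod (2*2)) + 1 - 0) = 3 by decide,
    show (0 + 2 : ZMod (2*2)) = 2 by decide,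
    show (2 - 0 : ZMod (2*2)) = 2 by decide,
    show (((2:Nat) : ZMod (2*2)) + 2 - 0) = 0 by decide,
    show (0 + 3 : ZMod (2*2)) = 3 by decide,
    show (3 - 0 : ZMod (2*2)) = 3 by decide,
    show (((2:Nat) : ZMod (2*2)) + 3 - 0) = 1 by decide,
    show (1 + 0 : ZMod (2*2)) = 1 by decide,
    show (0 - 1 : ZMod (2*2)) = 3 by decide,
    show (((2:Nat) : ZMod (2*2)) + 0 - 1) = 1 by decide,
    show (1 + 1 : ZMod (2*2)) = 2 by decide,
    show (1 - 1 : ZMod (2*2)) = 0 by decide,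
    show (((2:Nat) : ZMod (2*2)) + 1 - 1) = 2 by decide,
    show (1 + 2 : ZMod (2*2)) = 3 by decide,
    show (2 - 1 : ZMod (2*2)) = 1 by decide,
    show (((2:Nat) : ZMod (2*2)) + 2 - 1) = 3 by decide,
    show (1 + 3 : ZMod (2*2)) = 0 by decide,
    show (3 - 1 : ZMod (2*2)) = 2 by decide,
    show (((2:Nat) : ZMod (2*2)) + 3 - 1) = 0 by decide,
    show (2 + 0 : ZMod (2*2)) = 2 by decide,
    show (0 - 2 : ZMod (2*2)) = 2 by decide,
    show (((2:Nat) : ZMod (2*2)) + 0 - 2) = 0 by decide,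
    show (2 + 1 : ZMod (2*2)) = 3 by decide,
    show (1 - 2 : ZMod (2*2)) = 3 by decide,
    show (((2:Nat) : ZMod (2*2)) + 1 - 2) = 1 by decide,
    show (2 + 2 : ZMod (2*2)) = 0 by decide,
    show (2 - 2 : ZMod (2*2)) = 0 by decide,
    show (((2:Nat) : ZMod (2*2)) + 2 - 2) = 2 by decide,
    show (2 + 3 : ZMod (2*2)) = 1 by decide,
    show (3 - 2 : ZMod (2*2)) = 1 by decide,
    show (((2:Nat) : ZMod (2*2)) + 3 - 2) = 3 by decide,
    show (3 + 0 : ZMod (2*2)) = 3 by decide,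
    show (0 - 3 : ZMod (2*2)) = 1 by decide,
    show (((2:Nat) : ZMod (2*2)) + 0 - 3) = 3 by decide,
    show (3 + 1 : ZMod (2*2)) = 0 by decide,
    show (1 - 3 : ZMod (2*2)) = 2 by decide,
    show (((2:Nat) : ZMod (2*2)) + 1 - 3) = 0 by decide,
    show (3 + 2 : ZMod (2*2)) = 1 by decide,
    show (2 - 3 : ZMod (2*2)) = 3 by decide,
    show (((2:Nat) : ZMod (2*2)) + 2 - 3) = 1 by decide,
    show (3 + 3 : ZMod (2*2)) = 2 by decide,
    show (3 - 3 : ZMod (2*2)) = 0 by decide,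
    show (((2:Nat) : ZMod (2*2)) + 3 - 3) = 2 by decide]
  match_scalars
  all_goals (first
    | ring1
    | linear_combination (h2 : (2:k) = 0)
    | linear_combination ω*h2
    | linear_combination 2*ω*h2
    | linear_combination (2+2*ω)*h2
    | linear_combination (1+ω)*h2
    | linear_combination hω - h2
    | linear_combination hω - (1+ω)*h2
    | linear_combination hω
    | linear_combination hω + ω*h2
    | linear_combination 2*hω - h2
    | linear_combination 2*hω
    | linear_combination 2*hω + ω*h2
    | linear_combination 4*hω - 2*h2
    | linear_combination 4*hω - h2
    | linear_combination 4*hω)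

theorem mul_S4Y (hω : ω * ω + ω + 1 = 0) (h2 : (2:k) = 0) :
    (ω • Ga 1 + Ga 2 + (1+ω) • Ga 3 + ω • Hx 0 + ω • Hx 1 + (1+ω) • Hx 2 + (1+ω) • Hx 3 : MonoidAlgebra k Q8) * ((1+ω) • Ga 1 + Hx 0 + ω • Hx 1) = (1+ω) • Ga 1 + (1+ω) • Ga 3 + Hx 0 + ω • Hx 1 + Hx 2 + ω • Hx 3 := by
  simp only [Ga, Hx, add_mul, mul_add, smul_mul_assoc, mul_smul_comm, smul_smul,
    ← map_mul, QuaternionGroup.a_mul_a, QuaternionGroup.a_mul_xa, QuaternionGroup.xa_mul_a,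
    QuaternionGroup.xa_mul_xa,
    show (0 + 0 : ZMod (2*2)) = 0 by decide,
    show (0 - 0 : ZMod (2*2)) = 0 by decide,
    show (((2:Nat) : ZMod (2*2)) + 0 - 0) = 2 by decide,
    show (0 + 1 : ZMod (2*2)) = 1 by decide,
    show (1 - 0 : ZMod (2*2)) = 1 by decide,
    show (((2:Nat) : ZMod (2*2)) + 1 - 0) = 3 by decide,
    show (0 + 2 : ZMod (2*2)) = 2 by decide,
    show (2 - 0 : ZMod (2*2)) = 2 by decide,
    show (((2:Nat) : ZMod (2*2)) + 2 - 0) = 0 by decide,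
    show (0 + 3 : ZMod (2*2)) = 3 by decide,
    show (3 - 0 : ZMod (2*2)) = 3 by decide,
    show (((2:Nat) : ZMod (2*2)) + 3 - 0) = 1 by decide,
    show (1 + 0 : ZMod (2*2)) = 1 by decide,
    show (0 - 1 : ZMod (2*2)) = 3 by decide,
    show (((2:Nat) : ZMod (2*2)) + 0 - 1) = 1 by decide,
    show (1 + 1 : ZMod (2*2)) = 2 by decide,
    show (1 - 1 : ZMod (2*2)) = 0 by decide,
    show (((2:Nat) : ZMod (2*2)) + 1 - 1) = 2 by decide,
    show (1 + 2 : ZMod (2*2)) = 3 by decide,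
    show (2 - 1 : ZMod (2*2)) = 1 by decide,
    show (((2:Nat) : ZMod (2*2)) + 2 - 1) = 3 by decide,
    show (1 + 3 : ZMod (2*2)) = 0 by decide,
    show (3 - 1 : ZMod (2*2)) = 2 by decide,
    show (((2:Nat) : ZMod (2*2)) + 3 - 1) = 0 by decide,
    show (2 + 0 : ZMod (2*2)) = 2 by decide,
    show (0 - 2 : ZMod (2*2)) = 2 by decide,
    show (((2:Nat) : ZMod (2*2)) + 0 - 2) = 0 by decide,
    show (2 + 1 : ZMod (2*2)) = 3 by decide,
    show (1 - 2 : ZMod (2*2)) = 3 by decide,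
    show (((2:Nat) : ZMod (2*2)) + 1 - 2) = 1 by decide,
    show (2 + 2 : ZMod (2*2)) = 0 by decide,
    show (2 - 2 : ZMod (2*2)) = 0 by decide,
    show (((2:Nat) : ZMod (2*2)) + 2 - 2) = 2 by decide,
    show (2 + 3 : ZMod (2*2)) = 1 by decide,
    show (3 - 2 : ZMod (2*2)) = 1 by decide,
    show (((2:Nat) : ZMod (2*2)) + 3 - 2) = 3 by decide,
    show (3 + 0 : ZMod (2*2)) = 3 by decide,
    show (0 - 3 : ZMod (2*2)) = 1 by decide,
    show (((2:Nat) : ZMod (2*2)) + 0 - 3) = 3 by decide,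
    show (3 + 1 : ZMod (2*2)) = 0 by decide,
    show (1 - 3 : ZMod (2*2)) = 2 by decide,
    show (((2:Nat) : ZMod (2*2)) + 1 - 3) = 0 by decide,
    show (3 + 2 : ZMod (2*2)) = 1 by decide,
    show (2 - 3 : ZMod (2*2)) = 3 by decide,
    show (((2:Nat) : ZMod (2*2)) + 2 - 3) = 1 by decide,
    show (3 + 3 : ZMod (2*2)) = 2 by decide,
    show (3 - 3 : ZMod (2*2)) = 0 by decide,
    show (((2:Nat) : ZMod (2*2)) + 3 - 3) = 2 by decide]
  match_scalars
  all_goals (first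
    | ring1
    | linear_combination (h2 : (2:k) = 0)
    | linear_combination ω*h2
    | linear_combination 2*ω*h2
    | linear_combination (2+2*ω)*h2
    | linear_combination (1+ω)*h2
    | linear_combination hω - h2
    | linear_combination hω - (1+ω)*h2
    | linear_combination hω
    | linear_combination hω + ω*h2
    | linear_combination 2*hω - h2
    | linear_combination 2*hω
    | linear_combination 2*hω + ω*h2
    | linear_combination 4*hω - 2*h2
    | linear_combination 4*hω - h2
    | linear_combination 4*hω)

theorem mul_S2Y (hω : ω * ω + ω + 1 = 0) (h2 : (2:k) = 0) :
    (ω • Ga 1 + ω • Ga 3 + Hx 0 + (1+ω) • Hx 1 + Hx 2 + (1+ω) • Hx 3 : MonoidAlgebra k Q8) * ((1+ω) • Ga 1 + Hx 0 + ω • Hx 1) = Ga 0 + Ga 1 + Ga 2 + Ga 3 + Hx 0 + Hx 1 + Hx 2 + Hx 3 := by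
  simp only [Ga, Hx, add_mul, mul_add, smul_mul_assoc, mul_smul_comm, smul_smul,
    ← map_mul, QuaternionGroup.a_mul_a, QuaternionGroup.a_mul_xa, QuaternionGroup.xa_mul_a,
    QuaternionGroup.xa_mul_xa,
    show (0 + 0 : ZMod (2*2)) = 0 by decide,
    show (0 - 0 : ZMod (2*2)) = 0 by decide,
    show (((2:Nat) : ZMod (2*2)) + 0 - 0) = 2 by decide,
    show (0 + 1 : ZMod (2*2)) = 1 by decide,
    show (1 - 0 : ZMod (2*2)) = 1 by decide,
    show (((2:Nat) : ZMod (2*2)) + 1 - 0) = 3 by decide,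
    show (0 + 2 : ZMod (2*2)) = 2 by decide,
    show (2 - 0 : ZMod (2*2)) = 2 by decide,
    show (((2:Nat) : ZMod (2*2)) + 2 - 0) = 0 by decide,
    show (0 + 3 : ZMod (2*2)) = 3 by decide,
    show (3 - 0 : ZMod (2*2)) = 3 by decide,
    show (((2:Nat) : ZMod (2*2)) + 3 - 0) = 1 by decide,
    show (1 + 0 : ZMod (2*2)) = 1 by decide,
    show (0 - 1 : ZMod (2*2)) = 3 by decide,
    show (((2:Nat) : ZMod (2*2)) + 0 - 1) = 1 by decide,
    show (1 + 1 : ZMod (2*2)) = 2 by decide,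
    show (1 - 1 : ZMod (2*2)) = 0 by decide,
    show (((2:Nat) : ZMod (2*2)) + 1 - 1) = 2 by decide,
    show (1 + 2 : ZMod (2*2)) = 3 by decide,
    show (2 - 1 : ZMod (2*2)) = 1 by decide,
    show (((2:Nat) : ZMod (2*2)) + 2 - 1) = 3 by decide,
    show (1 + 3 : ZMod (2*2)) = 0 by decide,
    show (3 - 1 : ZMod (2*2)) = 2 by decide,
    show (((2:Nat) : ZMod (2*2)) + 3 - 1) = 0 by decide,
    show (2 + 0 : ZMod (2*2)) = 2 by decide,
    show (0 - 2 : ZMod (2*2)) = 2 by decide,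
    show (((2:Nat) : ZMod (2*2)) + 0 - 2) = 0 by decide,
    show (2 + 1 : ZMod (2*2)) = 3 by decide,
    show (1 - 2 : ZMod (2*2)) = 3 by decide,
    show (((2:Nat) : ZMod (2*2)) + 1 - 2) = 1 by decide,
    show (2 + 2 : ZMod (2*2)) = 0 by decide,
    show (2 - 2 : ZMod (2*2)) = 0 by decide,
    show (((2:Nat) : ZMod (2*2)) + 2 - 2) = 2 by decide,
    show (2 + 3 : ZMod (2*2)) = 1 by decide,
    show (3 - 2 : ZMod (2*2)) = 1 by decide,
    show (((2:Nat) : ZMod (2*2)) + 3 - 2) = 3 by decide,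
    show (3 + 0 : ZMod (2*2)) = 3 by decide,
    show (0 - 3 : ZMod (2*2)) = 1 by decide,
    show (((2:Nat) : ZMod (2*2)) + 0 - 3) = 3 by decide,
    show (3 + 1 : ZMod (2*2)) = 0 by decide,
    show (1 - 3 : ZMod (2*2)) = 2 by decide,
    show (((2:Nat) : ZMod (2*2)) + 1 - 3) = 0 by decide,
    show (3 + 2 : ZMod (2*2)) = 1 by decide,
    show (2 - 3 : ZMod (2*2)) = 3 by decide,
    show (((2:Nat) : ZMod (2*2)) + 2 - 3) = 1 by decide,
    show (3 + 3 : ZMod (2*2)) = 2 by decide,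
    show (3 - 3 : ZMod (2*2)) = 0 by decide,
    show (((2:Nat) : ZMod (2*2)) + 3 - 3) = 2 by decide]
  match_scalars
  all_goals (first
    | ring1
    | linear_combination (h2 : (2:k) = 0)
    | linear_combination ω*h2
    | linear_combination 2*ω*h2
    | linear_combination (2+2*ω)*h2
    | linear_combination (1+ω)*h2
    | linear_combination hω - h2
    | linear_combination hω - (1+ω)*h2
    | linear_combination hω
    | linear_combination hω + ω*h2
    | linear_combination 2*hω - h2
    | linear_combination 2*hω
    | linear_combination 2*hω + ω*h2
    | linear_combination 4*hω - 2*h2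
    | linear_combination 4*hω - h2
    | linear_combination 4*hω)

theorem mul_S1S1 (hω : ω * ω + ω + 1 = 0) (h2 : (2:k) = 0) :
    ((1+ω) • Ga 1 + (1+ω) • Ga 3 + Hx 0 + ω • Hx 1 + Hx 2 + ω • Hx 3 : MonoidAlgebra k Q8) * ((1+ω) • Ga 1 + (1+ω) • Ga 3 + Hx 0 + ω • Hx 1 + Hx 2 + ω • Hx 3) = (0 : MonoidAlgebra k Q8) := by
  simp only [Ga, Hx, add_mul, mul_add, smul_mul_assoc, mul_smul_comm, smul_smul,
    ← map_mul, QuaternionGroup.a_mul_a, QuaternionGroup.a_mul_xa, QuaternionGroup.xa_mul_a,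
    QuaternionGroup.xa_mul_xa,
    show (0 + 0 : ZMod (2*2)) = 0 by decide,
    show (0 - 0 : ZMod (2*2)) = 0 by decide,
    show (((2:Nat) : ZMod (2*2)) + 0 - 0) = 2 by decide,
    show (0 + 1 : ZMod (2*2)) = 1 by decide,
    show (1 - 0 : ZMod (2*2)) = 1 by decide,
    show (((2:Nat) : ZMod (2*2)) + 1 - 0) = 3 by decide,
    show (0 + 2 : ZMod (2*2)) = 2 by decide,
    show (2 - 0 : ZMod (2*2)) = 2 by decide,
    show (((2:Nat) : ZMod (2*2)) + 2 - 0) = 0 by decide,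
    show (0 + 3 : ZMod (2*2)) = 3 by decide,
    show (3 - 0 : ZMod (2*2)) = 3 by decide,
    show (((2:Nat) : ZMod (2*2)) + 3 - 0) = 1 by decide,
    show (1 + 0 : ZMod (2*2)) = 1 by decide,
    show (0 - 1 : ZMod (2*2)) = 3 by decide,
    show (((2:Nat) : ZMod (2*2)) + 0 - 1) = 1 by decide,
    show (1 + 1 : ZMod (2*2)) = 2 by decide,
    show (1 - 1 : ZMod (2*2)) = 0 by decide,
    show (((2:Nat) : ZMod (2*2)) + 1 - 1) = 2 by decide,
    show (1 + 2 : ZMod (2*2)) = 3 by decide,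
    show (2 - 1 : ZMod (2*2)) = 1 by decide,
    show (((2:Nat) : ZMod (2*2)) + 2 - 1) = 3 by decide,
    show (1 + 3 : ZMod (2*2)) = 0 by decide,
    show (3 - 1 : ZMod (2*2)) = 2 by decide,
    show (((2:Nat) : ZMod (2*2)) + 3 - 1) = 0 by decide,
    show (2 + 0 : ZMod (2*2)) = 2 by decide,
    show (0 - 2 : ZMod (2*2)) = 2 by decide,
    show (((2:Nat) : ZMod (2*2)) + 0 - 2) = 0 by decide,
    show (2 + 1 : ZMod (2*2)) = 3 by decide,
    show (1 - 2 : ZMod (2*2)) = 3 by decide,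
    show (((2:Nat) : ZMod (2*2)) + 1 - 2) = 1 by decide,
    show (2 + 2 : ZMod (2*2)) = 0 by decide,
    show (2 - 2 : ZMod (2*2)) = 0 by decide,
    show (((2:Nat) : ZMod (2*2)) + 2 - 2) = 2 by decide,
    show (2 + 3 : ZMod (2*2)) = 1 by decide,
    show (3 - 2 : ZMod (2*2)) = 1 by decide,
    show (((2:Nat) : ZMod (2*2)) + 3 - 2) = 3 by decide,
    show (3 + 0 : ZMod (2*2)) = 3 by decide,
    show (0 - 3 : ZMod (2*2)) = 1 by decide,
    show (((2:Nat) : ZMod (2*2)) + 0 - 3) = 3 by decide,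
    show (3 + 1 : ZMod (2*2)) = 0 by decide,
    show (1 - 3 : ZMod (2*2)) = 2 by decide,
    show (((2:Nat) : ZMod (2*2)) + 1 - 3) = 0 by decide,
    show (3 + 2 : ZMod (2*2)) = 1 by decide,
    show (2 - 3 : ZMod (2*2)) = 3 by decide,
    show (((2:Nat) : ZMod (2*2)) + 2 - 3) = 1 by decide,
    show (3 + 3 : ZMod (2*2)) = 2 by decide,
    show (3 - 3 : ZMod (2*2)) = 0 by decide,
    show (((2:Nat) : ZMod (2*2)) + 3 - 3) = 2 by decide]
  match_scalars
  all_goals (first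
    | ring1
    | linear_combination (h2 : (2:k) = 0)
    | linear_combination ω*h2
    | linear_combination 2*ω*h2
    | linear_combination (2+2*ω)*h2
    | linear_combination (1+ω)*h2
    | linear_combination hω - h2
    | linear_combination hω - (1+ω)*h2
    | linear_combination hω
    | linear_combination hω + ω*h2
    | linear_combination 2*hω - h2
    | linear_combination 2*hω
    | linear_combination 2*hω + ω*h2
    | linear_combination 4*hω - 2*h2
    | linear_combination 4*hω - h2
    | linear_combination 4*hω)

theorem mul_S2S2 (hω : ω * ω + ω + 1 = 0) (h2 : (2:k) = 0) :
    (ω • Ga 1 + ω • Ga 3 + Hx 0 + (1+ω) • Hx 1 + Hx 2 + (1+ω) • Hx 3 : MonoidAlgebra k Q8) * (ω • Ga 1 + ω • Ga 3 + Hx 0 + (1+ω) • Hx 1 + Hx 2 + (1+ω) • Hx 3) = (0 : MonoidAlgebra k Q8) := by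
  simp only [Ga, Hx, add_mul, mul_add, smul_mul_assoc, mul_smul_comm, smul_smul,
    ← map_mul, QuaternionGroup.a_mul_a, QuaternionGroup.a_mul_xa, QuaternionGroup.xa_mul_a,
    QuaternionGroup.xa_mul_xa,
    show (0 + 0 : ZMod (2*2)) = 0 by decide,
    show (0 - 0 : ZMod (2*2)) = 0 by decide,
    show (((2:Nat) : ZMod (2*2)) + 0 - 0) = 2 by decide,
    show (0 + 1 : ZMod (2*2)) = 1 by decide,
    show (1 - 0 : ZMod (2*2)) = 1 by decide,
    show (((2:Nat) : ZMod (2*2)) + 1 - 0) = 3 by decide,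
    show (0 + 2 : ZMod (2*2)) = 2 by decide,
    show (2 - 0 : ZMod (2*2)) = 2 by decide,
    show (((2:Nat) : ZMod (2*2)) + 2 - 0) = 0 by decide,
    show (0 + 3 : ZMod (2*2)) = 3 by decide,
    show (3 - 0 : ZMod (2*2)) = 3 by decide,
    show (((2:Nat) : ZMod (2*2)) + 3 - 0) = 1 by decide,
    show (1 + 0 : ZMod (2*2)) = 1 by decide,
    show (0 - 1 : ZMod (2*2)) = 3 by decide,
    show (((2:Nat) : ZMod (2*2)) + 0 - 1) = 1 by decide,
    show (1 + 1 : ZMod (2*2)) = 2 by decide,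
    show (1 - 1 : ZMod (2*2)) = 0 by decide,
    show (((2:Nat) : ZMod (2*2)) + 1 - 1) = 2 by decide,
    show (1 + 2 : ZMod (2*2)) = 3 by decide,
    show (2 - 1 : ZMod (2*2)) = 1 by decide,
    show (((2:Nat) : ZMod (2*2)) + 2 - 1) = 3 by decide,
    show (1 + 3 : ZMod (2*2)) = 0 by decide,
    show (3 - 1 : ZMod (2*2)) = 2 by decide,
    show (((2:Nat) : ZMod (2*2)) + 3 - 1) = 0 by decide,
    show (2 + 0 : ZMod (2*2)) = 2 by decide,
    show (0 - 2 : ZMod (2*2)) = 2 by decide,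
    show (((2:Nat) : ZMod (2*2)) + 0 - 2) = 0 by decide,
    show (2 + 1 : ZMod (2*2)) = 3 by decide,
    show (1 - 2 : ZMod (2*2)) = 3 by decide,
    show (((2:Nat) : ZMod (2*2)) + 1 - 2) = 1 by decide,
    show (2 + 2 : ZMod (2*2)) = 0 by decide,
    show (2 - 2 : ZMod (2*2)) = 0 by decide,
    show (((2:Nat) : ZMod (2*2)) + 2 - 2) = 2 by decide,
    show (2 + 3 : ZMod (2*2)) = 1 by decide,
    show (3 - 2 : ZMod (2*2)) = 1 by decide,
    show (((2:Nat) : ZMod (2*2)) + 3 - 2) = 3 by decide,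
    show (3 + 0 : ZMod (2*2)) = 3 by decide,
    show (0 - 3 : ZMod (2*2)) = 1 by decide,
    show (((2:Nat) : ZMod (2*2)) + 0 - 3) = 3 by decide,
    show (3 + 1 : ZMod (2*2)) = 0 by decide,
    show (1 - 3 : ZMod (2*2)) = 2 by decide,
    show (((2:Nat) : ZMod (2*2)) + 1 - 3) = 0 by decide,
    show (3 + 2 : ZMod (2*2)) = 1 by decide,
    show (2 - 3 : ZMod (2*2)) = 3 by decide,
    show (((2:Nat) : ZMod (2*2)) + 2 - 3) = 1 by decide,
    show (3 + 3 : ZMod (2*2)) = 2 by decide,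
    show (3 - 3 : ZMod (2*2)) = 0 by decide,
    show (((2:Nat) : ZMod (2*2)) + 3 - 3) = 2 by decide]
  match_scalars
  all_goals (first
    | ring1
    | linear_combination (h2 : (2:k) = 0)
    | linear_combination ω*h2
    | linear_combination 2*ω*h2
    | linear_combination (2+2*ω)*h2
    | linear_combination (1+ω)*h2
    | linear_combination hω - h2
    | linear_combination hω - (1+ω)*h2
    | linear_combination hω
    | linear_combination hω + ω*h2
    | linear_combination 2*hω - h2
    | linear_combination 2*hω
    | linear_combination 2*hω + ω*h2
    | linear_combination 4*hω - 2*h2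
    | linear_combination 4*hω - h2
    | linear_combination 4*hω)

theorem lin_a1 (hω : ω * ω + ω + 1 = 0) (h2 : (2:k) = 0) :
    (Ga 0 + (1+ω) • (ω • Ga 1 + Hx 0 + (1+ω) • Hx 1) + ω • ((1+ω) • Ga 1 + Hx 0 + ω • Hx 1) + ω • ((1+ω) • Ga 1 + Ga 2 + ω • Ga 3 + (1+ω) • Hx 0 + (1+ω) • Hx 1 + ω • Hx 2 + ω • Hx 3) + (1+ω) • (ω • Ga 1 + Ga 2 + (1+ω) • Ga 3 + ω • Hx 0 + ω • Hx 1 + (1+ω) • Hx 2 + (1+ω) • Hx 3) + (Ga 0 + Ga 1 + Ga 2 + Ga 3 + Hx 0 + Hx 1 + Hx 2 + Hx 3) : MonoidAlgebra k Q8) = Ga 1 := by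
  simp only [Ga, Hx, smul_add, smul_smul]
  match_scalars
  all_goals (first
    | ring1
    | linear_combination (h2 : (2:k) = 0)
    | linear_combination ω*h2
    | linear_combination 2*ω*h2
    | linear_combination (2+2*ω)*h2
    | linear_combination (1+ω)*h2
    | linear_combination hω - h2
    | linear_combination hω - (1+ω)*h2
    | linear_combination hω
    | linear_combination hω + ω*h2
    | linear_combination 2*hω - h2
    | linear_combination 2*hω
    | linear_combination 2*hω + ω*h2
    | linear_combination 4*hω - 2*h2
    | linear_combination 4*hω - h2
    | linear_combination 4*hω)

theorem lin_xa0 (hω : ω * ω + ω + 1 = 0) (h2 : (2:k) = 0) :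
    (Ga 0 + (ω • Ga 1 + Hx 0 + (1+ω) • Hx 1) + ((1+ω) • Ga 1 + Hx 0 + ω • Hx 1) + ω • ((1+ω) • Ga 1 + Ga 2 + ω • Ga 3 + (1+ω) • Hx 0 + (1+ω) • Hx 1 + ω • Hx 2 + ω • Hx 3) + (1+ω) • (ω • Ga 1 + Ga 2 + (1+ω) • Ga 3 + ω • Hx 0 + ω • Hx 1 + (1+ω) • Hx 2 + (1+ω) • Hx 3) + (Ga 0 + Ga 1 + Ga 2 + Ga 3 + Hx 0 + Hx 1 + Hx 2 + Hx 3) : MonoidAlgebra k Q8) = Hx 0 := by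
  simp only [Ga, Hx, smul_add, smul_smul]
  match_scalars
  all_goals (first
    | ring1
    | linear_combination (h2 : (2:k) = 0)
    | linear_combination ω*h2
    | linear_combination 2*ω*h2
    | linear_combination (2+2*ω)*h2
    | linear_combination (1+ω)*h2
    | linear_combination hω - h2
    | linear_combination hω - (1+ω)*h2
    | linear_combination hω
    | linear_combination hω + ω*h2
    | linear_combination 2*hω - h2
    | linear_combination 2*hω
    | linear_combination 2*hω + ω*h2
    | linear_combination 4*hω - 2*h2
    | linear_combination 4*hω - h2
    | linear_combination 4*hω)

end MAlg


section Indep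

/-- regular representation matrix of x -/
def Xz : Matrix (Fin 8) (Fin 8) (ZMod 2) :=
  !![0,0,0,0,0,0,0,0; 1,0,0,0,0,0,0,0; 0,0,0,0,0,0,0,0; 0,0,1,0,0,0,0,0;
     0,0,0,0,0,0,0,0; 0,0,0,0,1,0,0,0; 0,1,0,0,0,0,0,0; 0,0,0,0,0,0,1,0]
/-- regular representation matrix of y -/
def Yz : Matrix (Fin 8) (Fin 8) (ZMod 2) :=
  !![0,0,0,0,0,0,0,0; 0,0,0,0,0,0,0,0; 1,0,0,0,0,0,0,0; 0,0,0,0,0,0,0,0;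
     0,1,0,0,0,0,0,0; 0,0,1,0,0,0,0,0; 0,0,0,1,0,0,0,0; 0,0,0,0,0,1,0,0]

def Mzm : Fin 8 → Matrix (Fin 8) (Fin 8) (ZMod 2) :=
  ![1, Xz, Yz, Xz*Yz, Yz*Xz, Xz*Yz*Xz, Yz*Xz*Yz, Xz*Yz*Xz*Yz]

theorem relZ1 : Xz * Xz + Yz * Xz * Yz = 0 := by decide
theorem relZ2 : Yz * Yz + Xz * Yz * Xz = 0 := by decide
theorem relZ3 : Xz ^ 4 = 0 := by decide
theorem relZ4 : Yz ^ 4 = 0 := by decide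
theorem colz : ∀ i j : Fin 8, Mzm i j 0 = (1 : Matrix (Fin 8) (Fin 8) (ZMod 2)) j i := by decide

variable {k : Type*} [Field k] [CharP k 2]

/-- extract column 0 -/
def Lcol : Matrix (Fin 8) (Fin 8) k →ₗ[k] (Fin 8 → k) where
  toFun M := fun j => M j 0
  map_add' _ _ := rfl
  map_smul' _ _ := rfl

/-- cast matrices from `ZMod 2` -/
def muM : Matrix (Fin 8) (Fin 8) (ZMod 2) →+* Matrix (Fin 8) (Fin 8) k :=
  (ZMod.castHom (dvd_refl 2) k).mapMatrix

/-- the regular representation of `A` -/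
noncomputable def rep : A k →ₐ[k] Matrix (Fin 8) (Fin 8) k :=
  RingQuot.liftAlgHom k ⟨FreeAlgebra.lift k ![muM Xz, muM Yz], by
    intro a b h
    cases h with
    | rx =>
      simp only [map_add, map_mul, map_zero, QP.Xg, QP.Yg, FreeAlgebra.lift_ι_apply,
        Matrix.cons_val_zero, Matrix.cons_val_one, Matrix.head_cons]
      rw [← map_mul, ← map_mul, ← map_mul, ← map_add, relZ1, map_zero]
    | ry =>
      simp only [map_add, map_mul, map_zero, QP.Xg, QP.Yg, FreeAlgebra.lift_ι_apply,
        Matrix.cons_val_zero, Matrix.cons_val_one, Matrix.head_cons]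
      rw [← map_mul, ← map_mul, ← map_mul, ← map_add, relZ2, map_zero]
    | x4 =>
      simp only [map_pow, map_zero, QP.Xg, FreeAlgebra.lift_ι_apply, Matrix.cons_val_zero]
      rw [← map_pow, relZ3, map_zero]
    | y4 =>
      simp only [map_pow, map_zero, QP.Yg, FreeAlgebra.lift_ι_apply, Matrix.cons_val_one,
        Matrix.head_cons, Matrix.cons_val_zero]
      rw [← map_pow, relZ4, map_zero]⟩

lemma rep_x : rep (x k) = muM Xz := by
  simp only [QP.x, rep, RingQuot.liftAlgHom_mkAlgHom_apply, QP.Xg, FreeAlgebra.lift_ι_apply,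
    Matrix.cons_val_zero]

lemma rep_y : rep (y k) = muM Yz := by
  simp only [QP.y, rep, RingQuot.liftAlgHom_mkAlgHom_apply, QP.Yg, FreeAlgebra.lift_ι_apply,
    Matrix.cons_val_one, Matrix.head_cons, Matrix.cons_val_zero]

lemma rep_mon (i : Fin 8) : rep (mon k i) = muM (Mzm i) := by
  fin_cases i
  · show rep (mon k 0) = muM (Mzm 0)
    rw [monv0, map_one]
    exact (map_one (muM (k := k))).symm
  · show rep (mon k 1) = muM (Mzm 1)
    rw [monv1, rep_x]; rfl
  · show rep (mon k 2) = muM (Mzm 2)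
    rw [monv2, rep_y]; rfl
  · show rep (mon k 3) = muM (Mzm 3)
    rw [monv3, map_mul, rep_x, rep_y, ← map_mul]; rfl
  · show rep (mon k 4) = muM (Mzm 4)
    rw [monv4, map_mul, rep_y, rep_x, ← map_mul]; rfl
  · show rep (mon k 5) = muM (Mzm 5)
    rw [monv5, map_mul, map_mul, rep_x, rep_y, ← map_mul, ← map_mul]; rfl
  · show rep (mon k 6) = muM (Mzm 6)
    rw [monv6, map_mul, map_mul, rep_y, rep_x, ← map_mul, ← map_mul]; rfl
  · show rep (mon k 7) = muM (Mzm 7)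
    rw [monv7, map_mul, map_mul, map_mul, rep_x, rep_y, ← map_mul, ← map_mul, ← map_mul]; rfl

theorem mon_indep : LinearIndependent k (mon k) := by
  apply LinearIndependent.of_comp ((Lcol : Matrix (Fin 8) (Fin 8) k →ₗ[k] _).comp
    (rep.toLinearMap))
  have key : (⇑((Lcol : Matrix (Fin 8) (Fin 8) k →ₗ[k] _).comp rep.toLinearMap) ∘ mon k)
      = fun i => Pi.single i (1:k) := by
    funext i j
    simp only [Function.comp_apply, LinearMap.comp_apply, AlgHom.toLinearMap_apply, rep_mon]
    show ZMod.castHom (dvd_refl 2) k ((Mzm i) j 0) = (Pi.single i (1:k) : Fin 8 → k) j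
    rw [colz i j, Matrix.one_apply, Pi.single_apply]
    split <;> simp
  rw [key]
  have := (Pi.basisFun k (Fin 8)).linearIndependent
  rwa [show ⇑(Pi.basisFun k (Fin 8)) = fun i => Pi.single i (1:k) from
    funext fun i => Pi.basisFun_apply k (Fin 8) i] at this

/-- the monomial basis -/
noncomputable def monBasis : Module.Basis (Fin 8) k (A k) :=
  Module.Basis.mk mon_indep (by rw [span_mon_top])

end Indep


section Iso
open QuaternionGroup
variable {k : Type} [Field k] [CharP k 2]

theorem exists_iso (ω : k) (hω : ω * ω + ω + 1 = 0) :
    Nonempty (MonoidAlgebra k (QuaternionGroup 2) ≃ₐ[k] A k) := by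
  have h2 : (2:k) = 0 := two_eq_zero
  set F : FreeAlgebra k (Fin 2) →ₐ[k] MonoidAlgebra k Q8 :=
    FreeAlgebra.lift k ![(ω • Ga 1 + Hx 0 + (1+ω) • Hx 1 : MonoidAlgebra k Q8),
      ((1+ω) • Ga 1 + Hx 0 + ω • Hx 1 : MonoidAlgebra k Q8)] with hF
  have hrel : ∀ ⦃a b : FreeAlgebra k (Fin 2)⦄, QRel k a b → F a = F b := by
    intro a b h
    cases h with
    | rx =>
      simp only [hF, map_add, map_mul, map_zero, QP.Xg, QP.Yg, FreeAlgebra.lift_ι_apply,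
        Matrix.cons_val_zero, Matrix.cons_val_one, Matrix.head_cons]
      rw [mul_XX ω hω h2, mul_YX ω hω h2, mul_S4Y ω hω h2]
      exact addself (k := k) _
    | ry =>
      simp only [hF, map_add, map_mul, map_zero, QP.Xg, QP.Yg, FreeAlgebra.lift_ι_apply,
        Matrix.cons_val_zero, Matrix.cons_val_one, Matrix.head_cons]
      rw [mul_YY ω hω h2, mul_XY ω hω h2, mul_S3X ω hω h2]
      exact addself (k := k) _
    | x4 =>
      simp only [hF, map_pow, map_zero, QP.Xg, FreeAlgebra.lift_ι_apply, Matrix.cons_val_zero]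
      rw [show (4:ℕ) = 2 + 2 from rfl, pow_add, pow_two, mul_XX ω hω h2, mul_S1S1 ω hω h2]
    | y4 =>
      simp only [hF, map_pow, map_zero, QP.Yg, FreeAlgebra.lift_ι_apply, Matrix.cons_val_one,
        Matrix.head_cons, Matrix.cons_val_zero]
      rw [show (4:ℕ) = 2 + 2 from rfl, pow_add, pow_two, mul_YY ω hω h2, mul_S2S2 ω hω h2]
  set phi : A k →ₐ[k] MonoidAlgebra k Q8 := RingQuot.liftAlgHom k ⟨F, hrel⟩ with hphi
  have hphix : phi (x k) = ω • Ga 1 + Hx 0 + (1+ω) • Hx 1 := by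
    simp only [QP.x, hphi, RingQuot.liftAlgHom_mkAlgHom_apply, hF, QP.Xg,
      FreeAlgebra.lift_ι_apply, Matrix.cons_val_zero]
  have hphiy : phi (y k) = (1+ω) • Ga 1 + Hx 0 + ω • Hx 1 := by
    simp only [QP.y, hphi, RingQuot.liftAlgHom_mkAlgHom_apply, hF, QP.Yg,
      FreeAlgebra.lift_ι_apply, Matrix.cons_val_one, Matrix.head_cons, Matrix.cons_val_zero]
  have hXr : (ω • Ga 1 + Hx 0 + (1+ω) • Hx 1 : MonoidAlgebra k Q8) ∈ phi.range :=
    ⟨x k, hphix⟩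
  have hYr : ((1+ω) • Ga 1 + Hx 0 + ω • Hx 1 : MonoidAlgebra k Q8) ∈ phi.range :=
    ⟨y k, hphiy⟩
  have hS3r : ((1+ω) • Ga 1 + Ga 2 + ω • Ga 3 + (1+ω) • Hx 0 + (1+ω) • Hx 1 + ω • Hx 2
      + ω • Hx 3 : MonoidAlgebra k Q8) ∈ phi.range := by
    rw [← mul_XY ω hω h2]
    exact mul_mem hXr hYr
  have hS4r : (ω • Ga 1 + Ga 2 + (1+ω) • Ga 3 + ω • Hx 0 + ω • Hx 1 + (1+ω) • Hx 2
      + (1+ω) • Hx 3 : MonoidAlgebra k Q8) ∈ phi.range := by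
    rw [← mul_YX ω hω h2]
    exact mul_mem hYr hXr
  have hS2r : (ω • Ga 1 + ω • Ga 3 + Hx 0 + (1+ω) • Hx 1 + Hx 2 + (1+ω) • Hx 3 :
      MonoidAlgebra k Q8) ∈ phi.range := by
    rw [← mul_S3X ω hω h2]
    exact mul_mem hS3r hXr
  have hS1r : ((1+ω) • Ga 1 + (1+ω) • Ga 3 + Hx 0 + ω • Hx 1 + Hx 2 + ω • Hx 3 :
      MonoidAlgebra k Q8) ∈ phi.range := by
    rw [← mul_S4Y ω hω h2]
    exact mul_mem hS4r hYr
  have hS7r : (Ga 0 + Ga 1 + Ga 2 + Ga 3 + Hx 0 + Hx 1 + Hx 2 + Hx 3 :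
      MonoidAlgebra k Q8) ∈ phi.range := by
    rw [← mul_S2Y ω hω h2]
    exact mul_mem hS2r hYr
  have h1r : (Ga 0 : MonoidAlgebra k Q8) ∈ phi.range := by
    have : (Ga 0 : MonoidAlgebra k Q8) = 1 := by
      rw [Ga, ← QuaternionGroup.one_def, map_one]
    rw [this]
    exact one_mem _
  have hGa1 : (Ga 1 : MonoidAlgebra k Q8) ∈ phi.range := by
    rw [← lin_a1 ω hω h2]
    refine add_mem (add_mem (add_mem (add_mem (add_mem h1r ?_) ?_) ?_) ?_) hS7r
    · exact SMulMemClass.smul_mem _ hXr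
    · exact SMulMemClass.smul_mem _ hYr
    · exact SMulMemClass.smul_mem _ hS3r
    · exact SMulMemClass.smul_mem _ hS4r
  have hHx0 : (Hx 0 : MonoidAlgebra k Q8) ∈ phi.range := by
    rw [← lin_xa0 ω hω h2]
    refine add_mem (add_mem (add_mem (add_mem (add_mem h1r hXr) hYr) ?_) ?_) hS7r
    · exact SMulMemClass.smul_mem _ hS3r
    · exact SMulMemClass.smul_mem _ hS4r
  have hA : ∀ i : ZMod (2*2), MonoidAlgebra.of k Q8 (a i) ∈ phi.range := by
    intro i
    have h1 : (a i : Q8) = (a 1) ^ (i.val) := by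
      rw [a_one_pow]
      congr 1
      rw [ZMod.natCast_val, ZMod.cast_id]
    rw [h1, map_pow]
    exact pow_mem hGa1 _
  have hall : ∀ g : Q8, MonoidAlgebra.of k Q8 g ∈ phi.range := by
    intro g
    cases g with
    | a i => exact hA i
    | xa i =>
      have h1 : (xa i : Q8) = xa 0 * a i := by rw [xa_mul_a, zero_add]
      rw [h1, map_mul]
      exact mul_mem hHx0 (hA i)
  have hsurj : Function.Surjective phi := by
    intro z
    have hz : z ∈ phi.range := by
      induction z using MonoidAlgebra.induction_on with
      | of g => exact hall g
      | add f g hf hg => exact add_mem hf hg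
      | smul r f hf => exact SMulMemClass.smul_mem _ hf
    obtain ⟨w, hw⟩ := hz
    exact ⟨w, hw⟩
  have hfinA : Module.Finite k (A k) := Module.Finite.of_basis monBasis
  let bG : Module.Basis Q8 k (MonoidAlgebra k Q8) := MonoidAlgebra.basis Q8 k
  have hfinM : Module.Finite k (MonoidAlgebra k Q8) := Module.Finite.of_basis bG
  have hr1 : Module.finrank k (A k) = 8 := by
    rw [Module.finrank_eq_card_basis (monBasis (k := k))]
    simp
  have hr2 : Module.finrank k (MonoidAlgebra k Q8) = 8 := by
    rw [Module.finrank_eq_card_basis bG, QuaternionGroup.card]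
  have hinj : Function.Injective phi :=
    (LinearMap.injective_iff_surjective_of_finrank_eq_finrank
      (f := phi.toLinearMap) (by rw [hr1, hr2])).2 hsurj
  exact ⟨(AlgEquiv.ofBijective phi ⟨hinj, hsurj⟩).symm⟩

end Iso

end QPAux

open QP in
/-- Over an algebraically closed field `k` of characteristic two, the group
algebra `kQ₈` of the quaternion group of order 8 is isomorphic as a
`k`-algebra to `A = k⟨x,y⟩/(x²+yxy, y²+xyx, x⁴, y⁴)`, and the images of the
monomials `1, x, y, xy, yx, xyx, yxy, xyxy` form a `k`-basis of `A`. -/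
theorem stmt_6 (k : Type) [Field k] [IsAlgClosed k] [CharP k 2] :
    Nonempty (MonoidAlgebra k (QuaternionGroup 2) ≃ₐ[k] A k) ∧
    LinearIndependent k (mon k) ∧
    Submodule.span k (Set.range (mon k)) = ⊤ := by
  refine ⟨?_, QPAux.mon_indep, QPAux.span_mon_top⟩
  obtain ⟨ω, hω⟩ : ∃ ω : k, ω * ω + ω + 1 = 0 := by
    obtain ⟨z, hz⟩ := IsAlgClosed.exists_root
      (Polynomial.X ^ 2 + Polynomial.X + Polynomial.C 1 : Polynomial k) (by
        have hd : (Polynomial.X ^ 2 + Polynomial.X + Polynomial.C 1 : Polynomial k).degree = 2 := by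
          compute_degree!
        rw [hd]
        decide)
    refine ⟨z, ?_⟩
    have := hz
    simp only [Polynomial.IsRoot, Polynomial.eval_add, Polynomial.eval_pow, Polynomial.eval_X,
      Polynomial.eval_C] at this
    linear_combination this
  exact QPAux.exists_iso ω hω
end
end

section
/- With Ψ_* and Φ_* the comparison chain maps between the bar resolution Bar_*(A) and the 4-periodic resolution P_*, one has Ψ_3 ∘ Φ_3 = id_{P_3} and Ψ_4 ∘ Φ_4 = id_{P_4}. -/
open scoped TensorProduct
open MulOpposite

noncomputable section

namespace QP
variable {k : Type} [Field k] (bb : Module.Basis (Fin 8) k (A k))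

lemma rext_mon (hbb : ∀ i, bb i = mon k i) {V : Type*} [AddCommGroup V] [Module k V]
    (g : Fin 8 → (A k →ₗ[k] V)) (i : Fin 8) (a : A k) :
    rext bb g (mon k i ⊗ₜ[k] a) = g i a := by
  rw [rext, TensorProduct.lift.tmul, ← hbb, Module.Basis.constr_basis]

lemma lm_tmul (a b c : A k) : lm k a (b ⊗ₜ[k] c) = (a * b) ⊗ₜ[k] c := rfl
lemma rm_tmul (a b c : A k) : rm k a (b ⊗ₜ[k] c) = b ⊗ₜ[k] (c * a) := rfl
lemma lmp_pair (a : A k) (u v : AA k) : lmp k a (u, v) = (lm k a u, lm k a v) := rfl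
lemma el_apply (p q a : A k) : el k p q a = p ⊗ₜ[k] (q * a) := rfl
lemma tneg_apply (a : A k) : tneg k a = (1 : A k) ⊗ₜ[k] a := rfl

variable (hbb : ∀ i, bb i = mon k i)
include hbb

lemma hpsi1x : psi1 bb (x k) = (((1:A k) ⊗ₜ[k] (1:A k), 0) : PP k) := by
  rw [psi1, t0, show x k = mon k 1 from rfl, rext_mon bb hbb]
  show ((el k 1 1).prod 0) 1 = _
  simp [el_apply, LinearMap.prod_apply]

lemma hpsi1y : psi1 bb (y k) = ((0, (1:A k) ⊗ₜ[k] (1:A k)) : PP k) := by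
  rw [psi1, t0, show y k = mon k 2 from rfl, rext_mon bb hbb]
  show (LinearMap.prod 0 (el k 1 1)) 1 = _
  simp [el_apply, LinearMap.prod_apply]

lemma hpsi2xx : psi2 bb (x k) (x k) = (((1:A k) ⊗ₜ[k] (1:A k), 0) : PP k) := by
  rw [psi2, hpsi1x bb hbb, lmp_pair, map_zero, lm_tmul, mul_one, t1,
    LinearMap.coprod_apply, map_zero, add_zero,
    show x k = mon k 1 from rfl, rext_mon bb hbb]
  show ((el k 1 1).prod 0) 1 = _
  simp [el_apply, LinearMap.prod_apply]

lemma hpsi2yx : psi2 bb (y k) (x k) = 0 := by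
  rw [psi2, hpsi1x bb hbb, lmp_pair, map_zero, lm_tmul, mul_one, t1,
    LinearMap.coprod_apply, map_zero, add_zero,
    show y k = mon k 2 from rfl, rext_mon bb hbb]
  rfl

lemma hpsi2yxy : psi2 bb (y k * x k) (y k) = 0 := by
  rw [psi2, hpsi1y bb hbb, lmp_pair, map_zero, lm_tmul, mul_one, t1,
    LinearMap.coprod_apply, map_zero, zero_add,
    show y k * x k = mon k 4 from rfl, rext_mon bb hbb]
  rfl

lemma hpsi2yy : psi2 bb (y k) (y k) = ((0, (1:A k) ⊗ₜ[k] (1:A k)) : PP k) := by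
  rw [psi2, hpsi1y bb hbb, lmp_pair, map_zero, lm_tmul, mul_one, t1,
    LinearMap.coprod_apply, map_zero, zero_add,
    show y k = mon k 2 from rfl, rext_mon bb hbb]
  show (LinearMap.prod 0 (el k 1 1)) 1 = _
  simp [el_apply, LinearMap.prod_apply]

lemma hpsi2xy : psi2 bb (x k) (y k) = 0 := by
  rw [psi2, hpsi1y bb hbb, lmp_pair, map_zero, lm_tmul, mul_one, t1,
    LinearMap.coprod_apply, map_zero, zero_add,
    show x k = mon k 1 from rfl, rext_mon bb hbb]
  rfl

lemma hpsi2xyx : psi2 bb (x k * y k) (x k) = 0 := by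
  rw [psi2, hpsi1x bb hbb, lmp_pair, map_zero, lm_tmul, mul_one, t1,
    LinearMap.coprod_apply, map_zero, add_zero,
    show x k * y k = mon k 3 from rfl, rext_mon bb hbb]
  rfl

lemma hpsi3xxx : psi3 bb (x k) (x k) (x k) = (1:A k) ⊗ₜ[k] (1:A k) := by
  rw [psi3, hpsi2xx bb hbb, lmp_pair, map_zero, lm_tmul, mul_one, t2,
    LinearMap.coprod_apply, map_zero, add_zero,
    show x k = mon k 1 from rfl, rext_mon bb hbb]
  show el k 1 1 1 = _
  simp [el_apply]

lemma hpsi3yyy : psi3 bb (y k) (y k) (y k) = 0 := by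
  rw [psi3, hpsi2yy bb hbb, lmp_pair, map_zero, lm_tmul, mul_one, t2,
    LinearMap.coprod_apply, map_zero, zero_add,
    show y k = mon k 2 from rfl, rext_mon bb hbb]
  rfl

lemma hpsi3xyx : psi3 bb (x k) (y k) (x k) = 0 := by
  rw [psi3, hpsi2yx bb hbb, map_zero, map_zero]

lemma hpsi3xyxy : psi3 bb (x k) (y k * x k) (y k) = 0 := by
  rw [psi3, hpsi2yxy bb hbb, map_zero, map_zero]

lemma hpsi3yxy : psi3 bb (y k) (x k) (y k) = 0 := by
  rw [psi3, hpsi2xy bb hbb, map_zero, map_zero]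

lemma hpsi3yxyx : psi3 bb (y k) (x k * y k) (x k) = 0 := by
  rw [psi3, hpsi2xyx bb hbb, map_zero, map_zero]

omit hbb in
lemma psi4_zero (a0 a b c : A k) (h : psi3 bb a b c = 0) : psi4 bb a0 a b c = 0 := by
  rw [psi4, h, map_zero, map_zero]

lemma hpsi4x (i : Fin 8) :
    psi4 bb (mon k i) (x k) (x k) (x k) = tneg k (tau bb (mon k i ⊗ₜ[k] (1:A k))) := by
  rw [psi4, hpsi3xxx bb hbb, lm_tmul, mul_one, t3, LinearMap.comp_apply]

lemma htau (i : Fin 8) :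
    tau bb (mon k i ⊗ₜ[k] (1:A k)) = (![0,0,0,0,0,0,0,1] i : A k) := by
  rw [tau, rext_mon bb hbb]
  fin_cases i <;> rfl

end QP

open QP

/-- With `Ψ_*` and `Φ_*` the comparison chain maps of bimodules between the
bar resolution and the 4-periodic resolution `P_*`, one has
`Ψ₃ ∘ Φ₃ = id_{P₃}` and `Ψ₄ ∘ Φ₄ = id_{P₄}`.  Both composites are bimodule
endomorphisms of `A⊗A`, so this is equivalent to their values at the
generator `1⊗1` being `1⊗1`, computed from
`Φ₃(1⊗1) = 1⊗x⊗x⊗x⊗1 + 1⊗x⊗y⊗x⊗y + 1⊗x⊗yx⊗y⊗1 + 1⊗y⊗y⊗y⊗1 + 1⊗y⊗x⊗y⊗x +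
1⊗y⊗xy⊗x⊗1`, `Φ₄(1⊗1) = Σ_{b∈B∖{1}} 1⊗b·Φ₃(1⊗1)·b*` and
`Ψ_n(1⊗a₁⊗⋯⊗a_n⊗1) = t_{n−1}(a₁·Ψ_{n−1}(1⊗a₂⊗⋯⊗a_n⊗1))`. -/
theorem stmt_10 (k : Type) [Field k] [IsAlgClosed k] [CharP k 2]
    (bb : Module.Basis (Fin 8) k (A k)) (hbb : ∀ i, bb i = mon k i) :
    -- Ψ₃(Φ₃(1⊗1)) = 1⊗1
    (psi3 bb (x k) (x k) (x k)
      + rm k (y k) (psi3 bb (x k) (y k) (x k))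
      + psi3 bb (x k) (y k * x k) (y k)
      + psi3 bb (y k) (y k) (y k)
      + rm k (x k) (psi3 bb (y k) (x k) (y k))
      + psi3 bb (y k) (x k * y k) (x k)
      = (1 : A k) ⊗ₜ[k] (1 : A k)) ∧
    -- Ψ₄(Φ₄(1⊗1)) = 1⊗1
    ((∑ i ∈ Finset.univ.erase (0 : Fin 8),
        (rm k (dm k i) (psi4 bb (mon k i) (x k) (x k) (x k))
          + rm k (y k * dm k i) (psi4 bb (mon k i) (x k) (y k) (x k))
          + rm k (dm k i) (psi4 bb (mon k i) (x k) (y k * x k) (y k))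
          + rm k (dm k i) (psi4 bb (mon k i) (y k) (y k) (y k))
          + rm k (x k * dm k i) (psi4 bb (mon k i) (y k) (x k) (y k))
          + rm k (dm k i) (psi4 bb (mon k i) (y k) (x k * y k) (x k))))
      = (1 : A k) ⊗ₜ[k] (1 : A k)) := by
  refine ⟨?_, ?_⟩
  · rw [hpsi3xxx bb hbb, hpsi3xyx bb hbb, hpsi3xyxy bb hbb, hpsi3yyy bb hbb,
      hpsi3yxy bb hbb, hpsi3yxyx bb hbb, map_zero, map_zero]
    simp
  · have z1 : ∀ a0, psi4 bb a0 (x k) (y k) (x k) = 0 :=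
      fun a0 => psi4_zero bb a0 _ _ _ (hpsi3xyx bb hbb)
    have z2 : ∀ a0, psi4 bb a0 (x k) (y k * x k) (y k) = 0 :=
      fun a0 => psi4_zero bb a0 _ _ _ (hpsi3xyxy bb hbb)
    have z3 : ∀ a0, psi4 bb a0 (y k) (y k) (y k) = 0 :=
      fun a0 => psi4_zero bb a0 _ _ _ (hpsi3yyy bb hbb)
    have z4 : ∀ a0, psi4 bb a0 (y k) (x k) (y k) = 0 :=
      fun a0 => psi4_zero bb a0 _ _ _ (hpsi3yxy bb hbb)
    have z5 : ∀ a0, psi4 bb a0 (y k) (x k * y k) (x k) = 0 :=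
      fun a0 => psi4_zero bb a0 _ _ _ (hpsi3yxyx bb hbb)
    have h0 : psi4 bb (mon k 0) (x k) (x k) (x k) = 0 := by
      rw [hpsi4x bb hbb, htau bb hbb]; exact map_zero _
    have h1 : psi4 bb (mon k 1) (x k) (x k) (x k) = 0 := by
      rw [hpsi4x bb hbb, htau bb hbb]; exact map_zero _
    have h2 : psi4 bb (mon k 2) (x k) (x k) (x k) = 0 := by
      rw [hpsi4x bb hbb, htau bb hbb]; exact map_zero _
    have h3 : psi4 bb (mon k 3) (x k) (x k) (x k) = 0 := by
      rw [hpsi4x bb hbb, htau bb hbb]; exact map_zero _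
    have h4 : psi4 bb (mon k 4) (x k) (x k) (x k) = 0 := by
      rw [hpsi4x bb hbb, htau bb hbb]; exact map_zero _
    have h5 : psi4 bb (mon k 5) (x k) (x k) (x k) = 0 := by
      rw [hpsi4x bb hbb, htau bb hbb]; exact map_zero _
    have h6 : psi4 bb (mon k 6) (x k) (x k) (x k) = 0 := by
      rw [hpsi4x bb hbb, htau bb hbb]; exact map_zero _
    have h7 : psi4 bb (mon k 7) (x k) (x k) (x k) = (1:A k) ⊗ₜ[k] (1:A k) := by
      rw [hpsi4x bb hbb, htau bb hbb]; rfl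
    have := Finset.sum_erase_eq_sub (G := AA k) (f := fun i => (rm k (dm k i)) (psi4 bb (mon k i) (x k) (x k) (x k)) +
                (rm k (y k * dm k i)) (psi4 bb (mon k i) (x k) (y k) (x k)) +
              (rm k (dm k i)) (psi4 bb (mon k i) (x k) (y k * x k) (y k)) +
            (rm k (dm k i)) (psi4 bb (mon k i) (y k) (y k) (y k)) +
          (rm k (x k * dm k i)) (psi4 bb (mon k i) (y k) (x k) (y k)) +
        (rm k (dm k i)) (psi4 bb (mon k i) (y k) (x k * y k) (x k))) (Finset.mem_univ (0:Fin 8))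
    rw [this, Fin.sum_univ_eight]
    simp only [z1, z2, z3, z4, z5, h0, h1, h2, h3, h4, h5, h6, h7, map_zero,
      add_zero, zero_add, sub_zero]
    rw [rm_tmul, show (1:A k) * dm k 7 = 1 from one_mul _ |>.trans rfl]
    exact sub_zero ((1:A k) ⊗ₜ[k] (1:A k))
end
end

section
/- Let u₁, u₁' ∈ Hom_{A^e}(P_1, A) be the bimodule maps with u₁(1⊗x⊗1) = 1+xy, u₁(1⊗y⊗1) = x and u₁'(1⊗x⊗1) = y, u₁'(1⊗y⊗1) = 1+yx. Then Σ_{b∈B∖{1}} ⟨u₁(C(b)), 1⟩·b* = 0 and Σ_{b∈B∖{1}} ⟨u₁'(C(b)), 1⟩·b* = 0 in A; that is, the Tradler operator satisfies Δ(u₁) = Δ(u₁') = 0 in Hom_{A^e}(P_0, A) ≅ A. -/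
open scoped TensorProduct
open MulOpposite

noncomputable section

open QP

set_option linter.unusedSectionVars false
set_option linter.unnecessarySeqFocus false
set_option linter.unreachableTactic false
set_option linter.unusedTactic false
set_option maxHeartbeats 1000000

section AuxLemmas

variable {k : Type*} [Field k] [CharP k 2]

lemma QPtwo0 (t : A k) : t + t = 0 := by
  have h2 : (2 : A k) = 0 := by
    have h0 : ((2:ℕ) : k) = 0 := CharP.cast_eq_zero k 2
    have h : (2 : A k) = algebraMap k (A k) 2 := (map_ofNat _ 2).symm
    rw [h, show (2:k) = ((2:ℕ):k) by norm_num, h0, map_zero]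
  calc t + t = 2 * t := (two_mul t).symm
    _ = 0 := by rw [h2, zero_mul]

lemma QPhrx : (x k) * (x k) + (y k) * (x k) * (y k) = 0 := by
  unfold x y
  rw [← map_mul, ← map_mul, ← map_mul, ← map_add,
    RingQuot.mkAlgHom_rel k QRel.rx, map_zero]

lemma QPhry : (y k) * (y k) + (x k) * (y k) * (x k) = 0 := by
  unfold x y
  rw [← map_mul, ← map_mul, ← map_mul, ← map_add,
    RingQuot.mkAlgHom_rel k QRel.ry, map_zero]

lemma QPhxx : (x k) * (x k) = (y k) * (x k) * (y k) := by
  calc (x k) * (x k) = (x k) * (x k) + ((y k) * (x k) * (y k) + (y k) * (x k) * (y k)) := by rw [QPtwo0, add_zero]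
    _ = ((x k) * (x k) + (y k) * (x k) * (y k)) + (y k) * (x k) * (y k) := by rw [add_assoc]
    _ = (y k) * (x k) * (y k) := by rw [QPhrx, zero_add]

lemma QPhyy : (y k) * (y k) = (x k) * (y k) * (x k) := by
  calc (y k) * (y k) = (y k) * (y k) + ((x k) * (y k) * (x k) + (x k) * (y k) * (x k)) := by rw [QPtwo0, add_zero]
    _ = ((y k) * (y k) + (x k) * (y k) * (x k)) + (x k) * (y k) * (x k) := by rw [add_assoc]
    _ = (x k) * (y k) * (x k) := by rw [QPhry, zero_add]

lemma QPhx4 : (x k) * (x k) * (x k) * (x k) = 0 := by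
  have h := RingQuot.mkAlgHom_rel k (QRel.x4 (k := k))
  rw [map_pow, map_zero] at h
  calc (x k) * (x k) * (x k) * (x k) = (x k) ^ 4 := by unfold x; noncomm_ring
    _ = 0 := h

lemma QPhy4 : (y k) * (y k) * (y k) * (y k) = 0 := by
  have h := RingQuot.mkAlgHom_rel k (QRel.y4 (k := k))
  rw [map_pow, map_zero] at h
  calc (y k) * (y k) * (y k) * (y k) = (y k) ^ 4 := by unfold y; noncomm_ring
    _ = 0 := h

lemma Lxxy : (x k)*(x k)*(y k) = 0 := by
  calc (x k)*(x k)*(y k) = (y k)*(x k)*(y k)*(y k) := by rw [QPhxx]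
    _ = (y k)*(x k)*((x k)*(y k)*(x k)) := by
        conv_rhs => rw [← QPhyy]
        try noncomm_ring
    _ = (y k)*((y k)*(x k)*(y k))*(y k)*(x k) := by
        conv_rhs => rw [← QPhxx]
        try noncomm_ring
    _ = ((x k)*(y k)*(x k))*(x k)*(y k)*(y k)*(x k) := by
        conv_rhs => rw [← QPhyy]
        try noncomm_ring
    _ = (x k)*(y k)*((y k)*(x k)*(y k))*(y k)*(y k)*(x k) := by
        conv_rhs => rw [← QPhxx]
        try noncomm_ring
    _ = (x k)*((x k)*(y k)*(x k))*(x k)*(y k)*(y k)*(y k)*(x k) := by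
        conv_rhs => rw [← QPhyy]
        try noncomm_ring
    _ = (x k)*(x k)*(y k)*((y k)*(x k)*(y k))*(y k)*(y k)*(y k)*(x k) := by
        conv_rhs => rw [← QPhxx]
        try noncomm_ring
    _ = (x k)*(x k)*(y k)*(y k)*(x k)*((y k)*(y k)*(y k)*(y k))*(x k) := by noncomm_ring
    _ = 0 := by rw [QPhy4] <;> noncomm_ring

lemma Lxyy : (x k)*(y k)*(y k) = 0 := by
  calc (x k)*(y k)*(y k) = (x k)*((x k)*(y k)*(x k)) := by
        conv_rhs => rw [← QPhyy]
        try noncomm_ring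
    _ = (x k)*(x k)*(y k)*(x k) := by noncomm_ring
    _ = 0 := by rw [Lxxy] <;> noncomm_ring

lemma Lyxx : (y k)*(x k)*(x k) = 0 := by
  calc (y k)*(x k)*(x k) = (y k)*((y k)*(x k)*(y k)) := by
        conv_rhs => rw [← QPhxx]
        try noncomm_ring
    _ = ((x k)*(y k)*(x k))*((x k)*(y k)) := by
        conv_rhs => rw [← QPhyy]
        try noncomm_ring
    _ = (x k)*(y k)*((y k)*(x k)*(y k))*(y k) := by
        conv_rhs => rw [← QPhxx]
        try noncomm_ring
    _ = (x k)*((x k)*(y k)*(x k))*(x k)*(y k)*(y k) := by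
        conv_rhs => rw [← QPhyy]
        try noncomm_ring
    _ = (x k)*(x k)*(y k)*(x k)*(x k)*((x k)*(y k)*(x k)) := by
        conv_rhs => rw [← QPhyy]
        try noncomm_ring
    _ = (x k)*(x k)*(y k)*((x k)*(x k)*(x k)*(y k)*(x k)) := by noncomm_ring
    _ = 0 := by rw [Lxxy] <;> noncomm_ring

lemma Lyyx : (y k)*(y k)*(x k) = 0 := by
  calc (y k)*(y k)*(x k) = ((x k)*(y k)*(x k))*(x k) := by rw [QPhyy]
    _ = (x k)*(y k)*((y k)*(x k)*(y k)) := by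
        conv_rhs => rw [← QPhxx]
        try noncomm_ring
    _ = (x k)*((x k)*(y k)*(x k))*(x k)*(y k) := by
        conv_rhs => rw [← QPhyy]
        try noncomm_ring
    _ = (x k)*(x k)*(y k)*((x k)*(x k)*(y k)) := by noncomm_ring
    _ = 0 := by rw [Lxxy] <;> noncomm_ring

lemma La3ab : (x k)*(x k)*(x k) = (x k)*(y k)*((x k)*(y k)) := by
  calc (x k)*(x k)*(x k) = (x k)*((x k)*(x k)) := by noncomm_ring
    _ = (x k)*((y k)*(x k)*(y k)) := by rw [QPhxx]
    _ = (x k)*(y k)*((x k)*(y k)) := by noncomm_ring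

lemma Lbabb : (y k)*((x k)*(y k))*(y k) = 0 := by
  calc (y k)*((x k)*(y k))*(y k) = (y k)*(x k)*((y k)*(y k)) := by noncomm_ring
    _ = (y k)*(x k)*((x k)*(y k)*(x k)) := by rw [QPhyy]
    _ = (y k)*(x k)*(x k)*((y k)*(x k)) := by noncomm_ring
    _ = 0 := by rw [Lyxx] <;> noncomm_ring

lemma Lbaab : (y k)*(x k)*((x k)*(y k)) = 0 := by
  calc (y k)*(x k)*((x k)*(y k)) = (y k)*((x k)*(x k))*(y k) := by noncomm_ring
    _ = (y k)*((y k)*(x k)*(y k))*(y k) := by rw [QPhxx]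
    _ = (y k)*(y k)*(x k)*((y k)*(y k)) := by noncomm_ring
    _ = 0 := by rw [Lyyx] <;> noncomm_ring

lemma Lababa : (x k)*(y k)*(x k)*((y k)*(x k)) = 0 := by
  calc (x k)*(y k)*(x k)*((y k)*(x k)) = (x k)*((y k)*(x k)*(y k))*(x k) := by noncomm_ring
    _ = (x k)*((x k)*(x k))*(x k) := by
        conv_rhs => rw [QPhxx]
        try noncomm_ring
    _ = (x k)*(x k)*(x k)*(x k) := by noncomm_ring
    _ = 0 := QPhx4

lemma V1 : pairc k (1 + (x k) * (y k)) (x k) (Cm k 1) = mon k 0 + mon k 3 := by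
  rw [show Cm k 1 = ((1:A k) ⊗ₜ[k] (1:A k), (0:AA k)) from rfl]
  unfold pairc QP.bimap QP.two QP.mulm
  simp only [LinearMap.coprod_apply, LinearMap.comp_apply,
    map_add, map_zero, TensorProduct.map_tmul, LinearMap.mulRight_apply,
    LinearMap.mulLeft_apply, LinearMap.mul'_apply, one_mul, mul_one, add_zero, zero_add]
  rw [show mon k 0 = (1:A k) from rfl, show mon k 3 = (x k)*(y k) from rfl]

lemma V2 : pairc k (1 + (x k) * (y k)) (x k) (Cm k 2) = mon k 1 := by
  rw [show Cm k 2 = ((0:AA k), (1:A k) ⊗ₜ[k] (1:A k)) from rfl]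
  unfold pairc QP.bimap QP.two QP.mulm
  simp only [LinearMap.coprod_apply, LinearMap.comp_apply,
    map_add, map_zero, TensorProduct.map_tmul, LinearMap.mulRight_apply,
    LinearMap.mulLeft_apply, LinearMap.mul'_apply, one_mul, mul_one, add_zero, zero_add]
  rw [show mon k 1 = (x k) from rfl]

lemma V3 : pairc k (1 + (x k) * (y k)) (x k) (Cm k 3) = mon k 2 + mon k 6 := by
  rw [show Cm k 3 = ((1:A k) ⊗ₜ[k] (y k), (x k) ⊗ₜ[k] (1:A k)) from rfl]
  unfold pairc QP.bimap QP.two QP.mulm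
  simp only [LinearMap.coprod_apply, LinearMap.comp_apply,
    map_add, map_zero, TensorProduct.map_tmul, LinearMap.mulRight_apply,
    LinearMap.mulLeft_apply, LinearMap.mul'_apply, one_mul, mul_one, add_zero, zero_add]
  rw [show mon k 2 = (y k) from rfl, show mon k 6 = (y k)*(x k)*(y k) from rfl]
  calc (1 + (x k)*(y k)) * (y k) + (x k)*(x k)
      = (y k) + (x k)*(y k)*(y k) + (x k)*(x k) := by noncomm_ring
    _ = (y k) + 0 + (x k)*(x k) := by rw [Lxyy] <;> noncomm_ring
    _ = (y k) + (y k)*(x k)*(y k) := by rw [QPhxx] <;> noncomm_ring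

lemma V4 : pairc k (1 + (x k) * (y k)) (x k) (Cm k 4) = mon k 2 := by
  rw [show Cm k 4 = ((y k) ⊗ₜ[k] (1:A k), (1:A k) ⊗ₜ[k] (x k)) from rfl]
  unfold pairc QP.bimap QP.two QP.mulm
  simp only [LinearMap.coprod_apply, LinearMap.comp_apply,
    map_add, map_zero, TensorProduct.map_tmul, LinearMap.mulRight_apply,
    LinearMap.mulLeft_apply, LinearMap.mul'_apply, one_mul, mul_one, add_zero, zero_add]
  rw [show mon k 2 = (y k) from rfl]
  calc (y k) * (1 + (x k)*(y k)) + (x k)*(x k)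
      = (y k) + ((y k)*(x k)*(y k) + (x k)*(x k)) := by noncomm_ring
    _ = (y k) + ((y k)*(x k)*(y k) + (y k)*(x k)*(y k)) := by rw [QPhxx] <;> noncomm_ring
    _ = (y k) := by rw [QPtwo0, add_zero]

lemma V5 : pairc k (1 + (x k) * (y k)) (x k) (Cm k 5) = mon k 3 + mon k 4 := by
  rw [show Cm k 5 = ((1:A k) ⊗ₜ[k] ((y k)*(x k)) + ((x k)*(y k)) ⊗ₜ[k] (1:A k), (x k) ⊗ₜ[k] (x k)) from rfl]
  unfold pairc QP.bimap QP.two QP.mulm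
  simp only [LinearMap.coprod_apply, LinearMap.comp_apply,
    map_add, map_zero, TensorProduct.map_tmul, LinearMap.mulRight_apply,
    LinearMap.mulLeft_apply, LinearMap.mul'_apply, one_mul, mul_one, add_zero, zero_add]
  rw [show mon k 3 = (x k)*(y k) from rfl, show mon k 4 = (y k)*(x k) from rfl]
  calc (1 + (x k)*(y k)) * ((y k)*(x k)) + (x k)*(y k)*(1 + (x k)*(y k)) + (x k)*(x k)*(x k)
      = (y k)*(x k) + (x k)*(y k)*(y k)*(x k) + ((x k)*(y k) + (x k)*(y k)*((x k)*(y k))) + (x k)*(x k)*(x k) := by noncomm_ring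
    _ = (y k)*(x k) + 0*(x k) + ((x k)*(y k) + (x k)*(y k)*((x k)*(y k))) + (x k)*(y k)*((x k)*(y k)) := by rw [Lxyy, La3ab] <;> noncomm_ring
    _ = (x k)*(y k) + (y k)*(x k) + ((x k)*(y k)*((x k)*(y k)) + (x k)*(y k)*((x k)*(y k))) := by noncomm_ring
    _ = (x k)*(y k) + (y k)*(x k) := by rw [QPtwo0, add_zero]

lemma V6 : pairc k (1 + (x k) * (y k)) (x k) (Cm k 6) = mon k 5 := by
  rw [show Cm k 6 = ((y k) ⊗ₜ[k] (y k), (1:A k) ⊗ₜ[k] ((x k)*(y k)) + ((y k)*(x k)) ⊗ₜ[k] (1:A k)) from rfl]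
  unfold pairc QP.bimap QP.two QP.mulm
  simp only [LinearMap.coprod_apply, LinearMap.comp_apply,
    map_add, map_zero, TensorProduct.map_tmul, LinearMap.mulRight_apply,
    LinearMap.mulLeft_apply, LinearMap.mul'_apply, one_mul, mul_one, add_zero, zero_add]
  rw [show mon k 5 = (x k)*(y k)*(x k) from rfl]
  calc (y k) * (1 + (x k)*(y k)) * (y k) + ((x k)*((x k)*(y k)) + (y k)*(x k)*(x k))
      = (y k)*(y k) + (y k)*((x k)*(y k))*(y k) + ((x k)*(x k)*(y k) + (y k)*(x k)*(x k)) := by noncomm_ring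
    _ = (x k)*(y k)*(x k) + 0 + (0 + 0) := by rw [QPhyy, Lbabb, Lxxy, Lyxx] <;> noncomm_ring
    _ = (x k)*(y k)*(x k) := by noncomm_ring

lemma V7 : pairc k (1 + (x k) * (y k)) (x k) (Cm k 7) = mon k 6 := by
  rw [show Cm k 7 = ((1:A k) ⊗ₜ[k] ((y k)*(x k)*(y k)) + ((x k)*(y k)) ⊗ₜ[k] (y k),
    (x k) ⊗ₜ[k] ((x k)*(y k)) + ((x k)*(y k)*(x k)) ⊗ₜ[k] (1:A k)) from rfl]
  unfold pairc QP.bimap QP.two QP.mulm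
  simp only [LinearMap.coprod_apply, LinearMap.comp_apply,
    map_add, map_zero, TensorProduct.map_tmul, LinearMap.mulRight_apply,
    LinearMap.mulLeft_apply, LinearMap.mul'_apply, one_mul, mul_one, add_zero, zero_add]
  rw [show mon k 6 = (y k)*(x k)*(y k) from rfl]
  calc (1 + (x k)*(y k)) * ((y k)*(x k)*(y k)) + (x k)*(y k)*(1 + (x k)*(y k))*(y k) + ((x k)*(x k)*((x k)*(y k)) + (x k)*(y k)*(x k)*(x k))
      = (y k)*(x k)*(y k) + (x k)*(y k)*(y k)*((x k)*(y k)) + ((x k)*(y k)*(y k) + (x k)*(y k)*((x k)*(y k))*(y k)) + ((x k)*((x k)*(x k)*(y k)) + (x k)*((y k)*(x k)*(x k))) := by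
        noncomm_ring
    _ = (y k)*(x k)*(y k) + 0*((x k)*(y k)) + (0 + (x k)*(y k)*((x k)*(y k))*(y k)) + ((x k)*0 + (x k)*0) := by
        rw [Lxyy, Lxxy, Lyxx] <;> noncomm_ring
    _ = (y k)*(x k)*(y k) + (x k)*(y k)*((x k)*(y k))*(y k) := by noncomm_ring
    _ = (y k)*(x k)*(y k) + (x k)*(x k)*(x k)*(y k) := by
        conv_rhs => rw [La3ab]
        try noncomm_ring
    _ = (y k)*(x k)*(y k) + (x k)*((x k)*(x k)*(y k)) := by noncomm_ring
    _ = (y k)*(x k)*(y k) := by rw [Lxxy] <;> noncomm_ring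

lemma W1 : pairc k (y k) (1 + (y k) * (x k)) (Cm k 1) = mon k 2 := by
  rw [show Cm k 1 = ((1:A k) ⊗ₜ[k] (1:A k), (0:AA k)) from rfl]
  unfold pairc QP.bimap QP.two QP.mulm
  simp only [LinearMap.coprod_apply, LinearMap.comp_apply,
    map_add, map_zero, TensorProduct.map_tmul, LinearMap.mulRight_apply,
    LinearMap.mulLeft_apply, LinearMap.mul'_apply, one_mul, mul_one, add_zero, zero_add]
  rw [show mon k 2 = (y k) from rfl]

lemma W2 : pairc k (y k) (1 + (y k) * (x k)) (Cm k 2) = mon k 0 + mon k 4 := by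
  rw [show Cm k 2 = ((0:AA k), (1:A k) ⊗ₜ[k] (1:A k)) from rfl]
  unfold pairc QP.bimap QP.two QP.mulm
  simp only [LinearMap.coprod_apply, LinearMap.comp_apply,
    map_add, map_zero, TensorProduct.map_tmul, LinearMap.mulRight_apply,
    LinearMap.mulLeft_apply, LinearMap.mul'_apply, one_mul, mul_one, add_zero, zero_add]
  rw [show mon k 0 = (1:A k) from rfl, show mon k 4 = (y k)*(x k) from rfl]

lemma W3 : pairc k (y k) (1 + (y k) * (x k)) (Cm k 3) = mon k 1 := by
  rw [show Cm k 3 = ((1:A k) ⊗ₜ[k] (y k), (x k) ⊗ₜ[k] (1:A k)) from rfl]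
  unfold pairc QP.bimap QP.two QP.mulm
  simp only [LinearMap.coprod_apply, LinearMap.comp_apply,
    map_add, map_zero, TensorProduct.map_tmul, LinearMap.mulRight_apply,
    LinearMap.mulLeft_apply, LinearMap.mul'_apply, one_mul, mul_one, add_zero, zero_add]
  rw [show mon k 1 = (x k) from rfl]
  calc (y k)*(y k) + (x k)*(1 + (y k)*(x k))
      = (x k)*(y k)*(x k) + ((x k) + (x k)*(y k)*(x k)) := by rw [QPhyy] <;> noncomm_ring
    _ = (x k) + ((x k)*(y k)*(x k) + (x k)*(y k)*(x k)) := by noncomm_ring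
    _ = (x k) := by rw [QPtwo0, add_zero]

lemma W4 : pairc k (y k) (1 + (y k) * (x k)) (Cm k 4) = mon k 1 + mon k 5 := by
  rw [show Cm k 4 = ((y k) ⊗ₜ[k] (1:A k), (1:A k) ⊗ₜ[k] (x k)) from rfl]
  unfold pairc QP.bimap QP.two QP.mulm
  simp only [LinearMap.coprod_apply, LinearMap.comp_apply,
    map_add, map_zero, TensorProduct.map_tmul, LinearMap.mulRight_apply,
    LinearMap.mulLeft_apply, LinearMap.mul'_apply, one_mul, mul_one, add_zero, zero_add]
  rw [show mon k 1 = (x k) from rfl, show mon k 5 = (x k)*(y k)*(x k) from rfl]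
  calc (y k)*(y k) + (1 + (y k)*(x k))*(x k)
      = (x k)*(y k)*(x k) + ((x k) + (y k)*(x k)*(x k)) := by rw [QPhyy] <;> noncomm_ring
    _ = (x k)*(y k)*(x k) + ((x k) + 0) := by rw [Lyxx] <;> noncomm_ring
    _ = (x k) + (x k)*(y k)*(x k) := by noncomm_ring

lemma W5 : pairc k (y k) (1 + (y k) * (x k)) (Cm k 5) = mon k 6 := by
  rw [show Cm k 5 = ((1:A k) ⊗ₜ[k] ((y k)*(x k)) + ((x k)*(y k)) ⊗ₜ[k] (1:A k), (x k) ⊗ₜ[k] (x k)) from rfl]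
  unfold pairc QP.bimap QP.two QP.mulm
  simp only [LinearMap.coprod_apply, LinearMap.comp_apply,
    map_add, map_zero, TensorProduct.map_tmul, LinearMap.mulRight_apply,
    LinearMap.mulLeft_apply, LinearMap.mul'_apply, one_mul, mul_one, add_zero, zero_add]
  rw [show mon k 6 = (y k)*(x k)*(y k) from rfl]
  calc (y k)*((y k)*(x k)) + (x k)*(y k)*(y k) + (x k)*(1 + (y k)*(x k))*(x k)
      = (y k)*(y k)*(x k) + (x k)*(y k)*(y k) + ((x k)*(x k) + (x k)*((y k)*(x k)*(x k))) := by noncomm_ring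
    _ = 0 + 0 + ((y k)*(x k)*(y k) + (x k)*0) := by rw [Lyyx, Lxyy, Lyxx, QPhxx] <;> noncomm_ring
    _ = (y k)*(x k)*(y k) := by noncomm_ring

lemma W6 : pairc k (y k) (1 + (y k) * (x k)) (Cm k 6) = mon k 3 + mon k 4 := by
  rw [show Cm k 6 = ((y k) ⊗ₜ[k] (y k), (1:A k) ⊗ₜ[k] ((x k)*(y k)) + ((y k)*(x k)) ⊗ₜ[k] (1:A k)) from rfl]
  unfold pairc QP.bimap QP.two QP.mulm
  simp only [LinearMap.coprod_apply, LinearMap.comp_apply,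
    map_add, map_zero, TensorProduct.map_tmul, LinearMap.mulRight_apply,
    LinearMap.mulLeft_apply, LinearMap.mul'_apply, one_mul, mul_one, add_zero, zero_add]
  rw [show mon k 3 = (x k)*(y k) from rfl, show mon k 4 = (y k)*(x k) from rfl]
  calc (y k)*(y k)*(y k) + ((1 + (y k)*(x k))*((x k)*(y k)) + (y k)*(x k)*(1 + (y k)*(x k)))
      = (y k)*((y k)*(y k)) + ((x k)*(y k) + (y k)*(x k)*((x k)*(y k))) + ((y k)*(x k) + (y k)*(x k)*((y k)*(x k))) := by noncomm_ring
    _ = (y k)*((x k)*(y k)*(x k)) + ((x k)*(y k) + 0) + ((y k)*(x k) + (y k)*(x k)*((y k)*(x k))) := by rw [QPhyy, Lbaab] <;> noncomm_ring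
    _ = (x k)*(y k) + (y k)*(x k) + ((y k)*(x k)*((y k)*(x k)) + (y k)*(x k)*((y k)*(x k))) := by noncomm_ring
    _ = (x k)*(y k) + (y k)*(x k) := by rw [QPtwo0, add_zero]

lemma W7 : pairc k (y k) (1 + (y k) * (x k)) (Cm k 7) = mon k 5 := by
  rw [show Cm k 7 = ((1:A k) ⊗ₜ[k] ((y k)*(x k)*(y k)) + ((x k)*(y k)) ⊗ₜ[k] (y k),
    (x k) ⊗ₜ[k] ((x k)*(y k)) + ((x k)*(y k)*(x k)) ⊗ₜ[k] (1:A k)) from rfl]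
  unfold pairc QP.bimap QP.two QP.mulm
  simp only [LinearMap.coprod_apply, LinearMap.comp_apply,
    map_add, map_zero, TensorProduct.map_tmul, LinearMap.mulRight_apply,
    LinearMap.mulLeft_apply, LinearMap.mul'_apply, one_mul, mul_one, add_zero, zero_add]
  rw [show mon k 5 = (x k)*(y k)*(x k) from rfl]
  calc (y k)*((y k)*(x k)*(y k)) + (x k)*(y k)*(y k)*(y k) + ((x k)*(1 + (y k)*(x k))*((x k)*(y k)) + (x k)*(y k)*(x k)*(1 + (y k)*(x k)))
      = (y k)*(y k)*(x k)*(y k) + (x k)*(y k)*(y k)*(y k) + ((x k)*(x k)*(y k) + (x k)*((y k)*(x k)*(x k))*(y k)) + ((x k)*(y k)*(x k) + (x k)*(y k)*(x k)*((y k)*(x k))) := by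
        noncomm_ring
    _ = 0*(y k) + 0*(y k) + (0 + (x k)*0*(y k)) + ((x k)*(y k)*(x k) + 0) := by
        rw [Lyyx, Lxyy, Lxxy, Lyxx, Lababa] <;> noncomm_ring
    _ = (x k)*(y k)*(x k) := by noncomm_ring

end AuxLemmas


/-- For the 1-cocycles `u₁ = (1+xy, x)` and `u₁' = (y, 1+yx)` in
`Hom_{A^e}(P₁, A)`, the Tradler operator
`Δ(f) = Σ_{b∈B∖{1}} ⟨f(C(b)), 1⟩·b*` vanishes:
`Δ(u₁) = Δ(u₁') = 0` in `Hom_{A^e}(P₀, A) ≅ A`. -/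
theorem stmt_13 (k : Type) [Field k] [IsAlgClosed k] [CharP k 2]
    (bb : Module.Basis (Fin 8) k (A k)) (hbb : ∀ i, bb i = mon k i) :
    (∑ i ∈ Finset.univ.erase (0 : Fin 8),
      bform bb (pairc k (1 + x k * y k) (x k) (Cm k i)) 1 • dm k i) = 0 ∧
    (∑ i ∈ Finset.univ.erase (0 : Fin 8),
      bform bb (pairc k (y k) (1 + y k * x k) (Cm k i)) 1 • dm k i) = 0 := by

  have key2 : ∀ (i j : Fin 8) (v : A k), i ≠ 7 → j ≠ 7 → v = mon k i + mon k j →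
      (bb.repr v) 7 = 0 := by
    intro i j v hi hj hv
    rw [hv, ← hbb i, ← hbb j]
    simp [Module.Basis.repr_self, Finsupp.single_apply, hi, hj]
  have key1 : ∀ (i : Fin 8) (v : A k), i ≠ 7 → v = mon k i → (bb.repr v) 7 = 0 := by
    intro i v hi hv
    rw [hv, ← hbb i]
    simp [Module.Basis.repr_self, Finsupp.single_apply, hi]
  constructor
  · rw [show (Finset.univ.erase (0:Fin 8)) = {1,2,3,4,5,6,7} from by decide,
      Finset.sum_insert (by decide), Finset.sum_insert (by decide), Finset.sum_insert (by decide),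
      Finset.sum_insert (by decide), Finset.sum_insert (by decide), Finset.sum_insert (by decide),
      Finset.sum_singleton]
    have e1 : bform bb (pairc k (1 + x k * y k) (x k) (Cm k 1)) 1 = 0 := by
      simp only [bform, mul_one]; exact key2 0 3 _ (by decide) (by decide) V1
    have e2 : bform bb (pairc k (1 + x k * y k) (x k) (Cm k 2)) 1 = 0 := by
      simp only [bform, mul_one]; exact key1 1 _ (by decide) V2
    have e3 : bform bb (pairc k (1 + x k * y k) (x k) (Cm k 3)) 1 = 0 := by
      simp only [bform, mul_one]; exact key2 2 6 _ (by decide) (by decide) V3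
    have e4 : bform bb (pairc k (1 + x k * y k) (x k) (Cm k 4)) 1 = 0 := by
      simp only [bform, mul_one]; exact key1 2 _ (by decide) V4
    have e5 : bform bb (pairc k (1 + x k * y k) (x k) (Cm k 5)) 1 = 0 := by
      simp only [bform, mul_one]; exact key2 3 4 _ (by decide) (by decide) V5
    have e6 : bform bb (pairc k (1 + x k * y k) (x k) (Cm k 6)) 1 = 0 := by
      simp only [bform, mul_one]; exact key1 5 _ (by decide) V6
    have e7 : bform bb (pairc k (1 + x k * y k) (x k) (Cm k 7)) 1 = 0 := by
      simp only [bform, mul_one]; exact key1 6 _ (by decide) V7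
    rw [e1, e2, e3, e4, e5, e6, e7]
    simp
  · rw [show (Finset.univ.erase (0:Fin 8)) = {1,2,3,4,5,6,7} from by decide,
      Finset.sum_insert (by decide), Finset.sum_insert (by decide), Finset.sum_insert (by decide),
      Finset.sum_insert (by decide), Finset.sum_insert (by decide), Finset.sum_insert (by decide),
      Finset.sum_singleton]
    have e1 : bform bb (pairc k (y k) (1 + y k * x k) (Cm k 1)) 1 = 0 := by
      simp only [bform, mul_one]; exact key1 2 _ (by decide) W1
    have e2 : bform bb (pairc k (y k) (1 + y k * x k) (Cm k 2)) 1 = 0 := by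
      simp only [bform, mul_one]; exact key2 0 4 _ (by decide) (by decide) W2
    have e3 : bform bb (pairc k (y k) (1 + y k * x k) (Cm k 3)) 1 = 0 := by
      simp only [bform, mul_one]; exact key1 1 _ (by decide) W3
    have e4 : bform bb (pairc k (y k) (1 + y k * x k) (Cm k 4)) 1 = 0 := by
      simp only [bform, mul_one]; exact key2 1 5 _ (by decide) (by decide) W4
    have e5 : bform bb (pairc k (y k) (1 + y k * x k) (Cm k 5)) 1 = 0 := by
      simp only [bform, mul_one]; exact key1 6 _ (by decide) W5
    have e6 : bform bb (pairc k (y k) (1 + y k * x k) (Cm k 6)) 1 = 0 := by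
      simp only [bform, mul_one]; exact key2 3 4 _ (by decide) (by decide) W6
    have e7 : bform bb (pairc k (y k) (1 + y k * x k) (Cm k 7)) 1 = 0 := by
      simp only [bform, mul_one]; exact key1 5 _ (by decide) W7
    rw [e1, e2, e3, e4, e5, e6, e7]
    simp
end
end

section
/- For a bimodule map α ∈ Hom_{A^e}(P_1, A), write α = (a₁, a₂) when α(1⊗x⊗1) = a₁ and α(1⊗y⊗1) = a₂, and set Δ(α) = Σ_{b∈B∖{1}} ⟨α(C(b)), 1⟩·b* ∈ A. Then: Δ((xyxy, xyx)) = Δ((xyxy, 0)) = yxy; Δ((xyx, 0)) = xy+yx; Δ((yxy, xyxy)) = Δ((0, xyxy)) = xyx. (These five cocycles represent the Hochschild classes p₁u₁ = p₂u₁', p₃u₁, p₂u₁ = p₂'u₁', p₂'u₁ = p₁u₁', p₃u₁' respectively, so Δ(p₁u₁) = Δ(p₃u₁) = Δ(p₂u₁') = p₂', Δ(p₂u₁) = Δ(p₂'u₁') = p₁, and Δ(p₂'u₁) = Δ(p₁u₁') = Δ(p₃u₁') = p₂, where p₁ = xy+yx, p₂ = xyx, p₂' = yxy.) -/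
open scoped TensorProduct
open MulOpposite

noncomputable section

open QP

-- ===== auxiliary lemmas =====
namespace QP

variable (k : Type*) [Field k]

section Aux
variable [CharP k 2]
set_option linter.unusedSectionVars false

lemma char2A (a : A k) : a + a = 0 := by
  have h2 : (2:k) = 0 := by exact_mod_cast (CharP.cast_eq_zero k 2)
  have := two_smul k a
  rw [h2, zero_smul] at this
  exact this.symm

lemma hx2 : x k * x k = y k * x k * y k := by
  have h := RingQuot.mkAlgHom_rel k (QRel.rx (k := k))
  simp only [map_add, map_mul, map_zero] at h
  rw [show RingQuot.mkAlgHom k (QRel k) (Xg k) = x k from rfl,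
    show RingQuot.mkAlgHom k (QRel k) (Yg k) = y k from rfl] at h
  have := eq_neg_of_add_eq_zero_left h
  rwa [neg_eq_of_add_eq_zero_left (char2A k (y k * x k * y k))] at this

lemma hy2 : y k * y k = x k * y k * x k := by
  have h := RingQuot.mkAlgHom_rel k (QRel.ry (k := k))
  simp only [map_add, map_mul, map_zero] at h
  rw [show RingQuot.mkAlgHom k (QRel k) (Xg k) = x k from rfl,
    show RingQuot.mkAlgHom k (QRel k) (Yg k) = y k from rfl] at h
  have := eq_neg_of_add_eq_zero_left h
  rwa [neg_eq_of_add_eq_zero_left (char2A k (x k * y k * x k))] at this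

lemma r1' (t : A k) : x k * (x k * t) = y k * (x k * (y k * t)) := by
  rw [← mul_assoc, hx2]; noncomm_ring

lemma r2' (t : A k) : y k * (y k * t) = x k * (y k * (x k * t)) := by
  rw [← mul_assoc, hy2]; noncomm_ring

lemma r4x' (t : A k) : x k * (x k * (x k * (x k * t))) = 0 := by
  have h : (x k) ^ 4 = 0 := by
    have := RingQuot.mkAlgHom_rel k (QRel.x4 (k := k))
    simpa [x, map_pow] using this
  calc x k * (x k * (x k * (x k * t))) = (x k)^4 * t := by noncomm_ring
    _ = 0 := by rw [h, zero_mul]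

lemma r4y' (t : A k) : y k * (y k * (y k * (y k * t))) = 0 := by
  have h : (y k) ^ 4 = 0 := by
    have := RingQuot.mkAlgHom_rel k (QRel.y4 (k := k))
    simpa [y, map_pow] using this
  calc y k * (y k * (y k * (y k * t))) = (y k)^4 * t := by noncomm_ring
    _ = 0 := by rw [h, zero_mul]

lemma kC0 : x k * (x k * (y k * x k)) = 0 := by
  set u := x k * (x k * (y k * x k)) with hu_def
  have hu : u = y k * (u * x k) := by
    rw [hu_def]
    conv_lhs => rw [r1', r2']
    simp only [mul_assoc]
  have h4 : u = y k * (y k * (y k * (y k * (u * x k * x k * x k * x k)))) := by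
    conv_lhs => rw [hu, hu, hu, hu]
    simp only [mul_assoc]
  rw [r4y'] at h4
  exact h4

lemma kC (t : A k) : x k * (x k * (y k * (x k * t))) = 0 := by
  have := congrArg (· * t) (kC0 k)
  simpa [mul_assoc] using this

lemma kE (t : A k) : x k * (y k * (x k * (x k * t))) = 0 := by
  rw [r1', r2', kC]

lemma kA (t : A k) : x k * (y k * (x k * (y k * (x k * t)))) = 0 := by
  rw [← r1', r4x']

lemma kB (t : A k) : x k * (y k * (x k * (y k * (y k * t)))) = 0 := by
  rw [r2', kE]

lemma kD (t : A k) : y k * (x k * (y k * (x k * (y k * t)))) = 0 := by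
  rw [← r1' k (x k * (y k * t)), r1' k (y k * t), kB]

lemma kF (t : A k) : y k * (x k * (y k * (y k * t))) = 0 := by
  rw [r2' k t, kC, mul_zero]

lemma kG (t : A k) : y k * (y k * (x k * (y k * t))) = 0 := by
  rw [r2', kE]

lemma kA0 : x k * (y k * (x k * (y k * x k))) = 0 := by simpa using kA k 1
lemma kB0 : x k * (y k * (x k * (y k * y k))) = 0 := by simpa using kB k 1
lemma kD0 : y k * (x k * (y k * (x k * y k))) = 0 := by simpa using kD k 1
lemma kE0 : x k * (y k * (x k * x k)) = 0 := by simpa using kE k 1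
lemma kF0 : y k * (x k * (y k * y k)) = 0 := by simpa using kF k 1
lemma kG0 : y k * (y k * (x k * y k)) = 0 := by simpa using kG k 1

lemma pYE5 : y k * (x k * (y k * x k)) = x k * (y k * (x k * y k)) := by
  have h : y k * (x k * y k) = x k * x k := by rw [hx2]; noncomm_ring
  rw [← r1', h]

end Aux

section Rfl

lemma Cm0' : Cm k 0 = 0 := rfl
lemma Cm1' : Cm k 1 = (1 ⊗ₜ 1, 0) := rfl
lemma Cm2' : Cm k 2 = (0, 1 ⊗ₜ 1) := rfl
lemma Cm3' : Cm k 3 = (1 ⊗ₜ y k, x k ⊗ₜ 1) := rfl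
lemma Cm4' : Cm k 4 = (y k ⊗ₜ 1, 1 ⊗ₜ x k) := rfl
lemma Cm5' : Cm k 5 = (1 ⊗ₜ (y k * x k) + (x k * y k) ⊗ₜ 1, x k ⊗ₜ x k) := rfl
lemma Cm6' : Cm k 6 = (y k ⊗ₜ y k, 1 ⊗ₜ (x k * y k) + (y k * x k) ⊗ₜ 1) := rfl
lemma Cm7' : Cm k 7 = (1 ⊗ₜ (y k * x k * y k) + (x k * y k) ⊗ₜ y k,
      x k ⊗ₜ (x k * y k) + (x k * y k * x k) ⊗ₜ 1) := rfl

lemma mon5' : mon k 5 = x k * y k * x k := rfl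
lemma mon6' : mon k 6 = y k * x k * y k := rfl
lemma mon7' : mon k 7 = x k * y k * x k * y k := rfl

lemma dm1' : dm k 1 = y k * x k * y k := rfl
lemma dm2' : dm k 2 = x k * y k * x k := rfl
lemma dm3' : dm k 3 = x k * y k := rfl
lemma dm4' : dm k 4 = y k * x k := rfl
lemma dm5' : dm k 5 = y k := rfl
lemma dm6' : dm k 6 = x k := rfl
lemma dm7' : dm k 7 = 1 := rfl

end Rfl

end QP
-- ===== end auxiliary lemmas =====


/-- For a bimodule map `α = (a₁,a₂) ∈ Hom_{A^e}(P₁,A)` (values on `1⊗x⊗1`,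
`1⊗y⊗1`), with `Δ(α) = Σ_{b∈B∖{1}} ⟨α(C(b)), 1⟩·b*`:
`Δ((xyxy,xyx)) = Δ((xyxy,0)) = yxy`, `Δ((xyx,0)) = xy+yx`,
`Δ((yxy,xyxy)) = Δ((0,xyxy)) = xyx`; these cocycles represent
`p₁u₁ = p₂u₁'`, `p₃u₁`, `p₂u₁ = p₂'u₁'`, `p₂'u₁ = p₁u₁'`, `p₃u₁'`, so
`Δ(p₁u₁) = Δ(p₃u₁) = Δ(p₂u₁') = p₂'`, `Δ(p₂u₁) = Δ(p₂'u₁') = p₁`,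
`Δ(p₂'u₁) = Δ(p₁u₁') = Δ(p₃u₁') = p₂`. -/
theorem stmt_14 (k : Type) [Field k] [IsAlgClosed k] [CharP k 2]
    (bb : Module.Basis (Fin 8) k (A k)) (hbb : ∀ i, bb i = mon k i) :
    -- Δ((xyxy, xyx)) = yxy
    (∑ i ∈ Finset.univ.erase (0 : Fin 8),
      bform bb (pairc k (mon k 7) (mon k 5) (Cm k i)) 1 • dm k i)
      = y k * x k * y k ∧
    -- Δ((xyxy, 0)) = yxy
    (∑ i ∈ Finset.univ.erase (0 : Fin 8),
      bform bb (pairc k (mon k 7) 0 (Cm k i)) 1 • dm k i)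
      = y k * x k * y k ∧
    -- Δ((xyx, 0)) = xy + yx
    (∑ i ∈ Finset.univ.erase (0 : Fin 8),
      bform bb (pairc k (mon k 5) 0 (Cm k i)) 1 • dm k i)
      = x k * y k + y k * x k ∧
    -- Δ((yxy, xyxy)) = xyx
    (∑ i ∈ Finset.univ.erase (0 : Fin 8),
      bform bb (pairc k (mon k 6) (mon k 7) (Cm k i)) 1 • dm k i)
      = x k * y k * x k ∧
    -- Δ((0, xyxy)) = xyx
    (∑ i ∈ Finset.univ.erase (0 : Fin 8),
      bform bb (pairc k 0 (mon k 7) (Cm k i)) 1 • dm k i)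
      = x k * y k * x k := by
  classical
  have key : ∀ (j : Fin 8) (a : A k), a = mon k j →
      bform bb a 1 = if j = 7 then 1 else 0 := by
    intro j a h
    rw [h, bform, mul_one, ← hbb, Module.Basis.repr_self_apply]
  have bf_zero : bform bb (0 : A k) 1 = 0 := by simp [bform]
  have bf_m5 : bform bb (x k * (y k * x k)) 1 = 0 := by
    rw [key 5 (x k * (y k * x k)) (by rw [mon5', mul_assoc])]
    simp
  have bf_m6 : bform bb (y k * (x k * y k)) 1 = 0 := by
    rw [key 6 (y k * (x k * y k)) (by rw [mon6', mul_assoc])]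
    simp
  have bf_m7 : bform bb (x k * (y k * (x k * y k))) 1 = 1 := by
    rw [key 7 (x k * (y k * (x k * y k))) (by rw [mon7', mul_assoc, mul_assoc])]
    simp
  have bf_ym7 : bform bb (y k * (x k * (y k * x k))) 1 = 1 := by
    rw [pYE5]; exact bf_m7
  refine ⟨?_, ?_, ?_, ?_, ?_⟩ <;>
  · rw [Finset.sum_erase_eq_sub (Finset.mem_univ (0 : Fin 8)), Fin.sum_univ_eight]
    simp only [Cm0', Cm1', Cm2', Cm3', Cm4', Cm5', Cm6', Cm7', mon5', mon6', mon7',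
      dm1', dm2', dm3', dm4', dm5', dm6', dm7',
      QP.pairc, QP.bimap, QP.mulm, QP.two, LinearMap.coprod_apply, LinearMap.comp_apply,
      TensorProduct.map_tmul, map_add, map_zero, LinearMap.mul'_apply,
      LinearMap.mulRight_apply, LinearMap.mulLeft_apply, LinearMap.id_coe, id_eq,
      TensorProduct.zero_tmul, TensorProduct.tmul_zero,
      one_mul, mul_one, mul_zero, zero_mul, add_zero, zero_add, mul_assoc,
      kA, kB, kC, kD, kE, kF, kG, kA0, kB0, kC0, kD0, kE0, kF0, kG0, pYE5,
      bf_zero, bf_m5, bf_m6, bf_m7, bf_ym7,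
      zero_smul, one_smul, sub_zero]
end
end
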